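/- arXiv:2102.05798 — 8 statements merged into one kernel-verified Lean document; each statement's English description precedes it below -/
import Mathlib

section
/- (Remark 2.) Consider a weighted directed graph on N nodes with adjacency matrix 𝒜 = [a_ij], a_ij ≥ 0, a_ii = 0, Laplacian L, and a nonempty root set 𝒞 ⊆ {1,…,N} such that the graph belongs to 𝔾_𝒞^N (every node is reachable by a directed path from some node of 𝒞). Then the expanded Laplacian L̄ = L + diag(ι₁,…,ι_N) is invertible, and every eigenvalue of L̄ has strictly positive real part. -/
open Matrix Filter Topology

noncomputable section

/-- Key lemma: the expanded Laplacian (over ℂ) has no eigenvector with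
eigenvalue of nonpositive real part. -/
lemma key_no_eig {N : ℕ} (a : Fin N → Fin N → ℝ)
    (ha_nonneg : ∀ i j, 0 ≤ a i j) (ha_diag : ∀ i, a i i = 0)
    (𝒞 : Finset (Fin N))
    (hreach : ∀ i : Fin N, ∃ r ∈ 𝒞, Relation.ReflTransGen (fun s t => 0 < a t s) r i)
    (μ : ℂ) (hμ : μ.re ≤ 0) (v : Fin N → ℂ) (hv : v ≠ 0)
    (heig : ((Matrix.of (fun i j : Fin N =>
      (if i = j then (∑ k, a i k) + (if i ∈ 𝒞 then (1 : ℝ) else 0) else -(a i j)))).map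
        Complex.ofReal).mulVec v = μ • v) : False := by
  classical
  set d : Fin N → ℝ := fun i => (∑ k, a i k) + (if i ∈ 𝒞 then (1 : ℝ) else 0) with hd
  set g : Fin N → ℝ := fun i => ‖v i‖ with hg
  obtain ⟨i1, hi1⟩ := Function.ne_iff.mp hv
  obtain ⟨i0, -, hmax⟩ := Finset.exists_max_image Finset.univ g ⟨i1, Finset.mem_univ i1⟩
  set M : ℝ := g i0 with hM
  have hMpos : 0 < M := lt_of_lt_of_le (by simpa [hg] using hi1) (hmax i1 (Finset.mem_univ i1))
  have hgM : ∀ j, g j ≤ M := fun j => hmax j (Finset.mem_univ j)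
  -- row equation
  have hrow : ∀ i, ((d i : ℂ) - μ) * v i = ∑ j, (a i j : ℂ) * v j := by
    intro i
    have h1 := congrFun heig i
    simp only [Matrix.mulVec, dotProduct, Matrix.map_apply, Matrix.of_apply,
      Pi.smul_apply, smul_eq_mul] at h1
    have h2 : ∀ j ∈ Finset.univ, ((if i = j then d i else -(a i j) : ℝ) : ℂ) * v j
        = (if i = j then (d i : ℂ) * v j else 0) - (a i j : ℂ) * v j := by
      intro j _
      by_cases h : i = j
      · subst h; simp [ha_diag i]
      · simp [h]
    rw [Finset.sum_congr rfl h2, Finset.sum_sub_distrib, Finset.sum_ite_eq] at h1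
    simp only [Finset.mem_univ, if_true] at h1
    linear_combination h1
  -- key inequality for maximizing nodes
  have hkey : ∀ i, g i = M → d i * M ≤ ∑ j, a i j * g j := by
    intro i hi
    have h1 : ‖((d i : ℂ) - μ) * v i‖ ≤ ∑ j, a i j * g j := by
      rw [hrow i]
      refine le_trans (norm_sum_le _ _) ?_
      refine Finset.sum_le_sum fun j _ => ?_
      rw [norm_mul, Complex.norm_real, Real.norm_eq_abs, abs_of_nonneg (ha_nonneg i j)]
    have h2 : d i ≤ ‖(d i : ℂ) - μ‖ := by
      refine le_trans ?_ (Complex.re_le_norm _)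
      simp only [Complex.sub_re, Complex.ofReal_re]
      linarith
    calc d i * M ≤ ‖(d i : ℂ) - μ‖ * M := by
          exact mul_le_mul_of_nonneg_right h2 hMpos.le
      _ = ‖((d i : ℂ) - μ) * v i‖ := by
          rw [norm_mul, ← hi]
      _ ≤ ∑ j, a i j * g j := h1
  have hsum_le : ∀ i, (∑ j, a i j * g j) ≤ (∑ k, a i k) * M := by
    intro i
    rw [Finset.sum_mul]
    exact Finset.sum_le_sum fun j _ =>
      mul_le_mul_of_nonneg_left (hgM j) (ha_nonneg i j)
  -- maximizing nodes are not in 𝒞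
  have hnotC : ∀ i, g i = M → i ∉ 𝒞 := by
    intro i hi hiC
    have h1 := hkey i hi
    have h2 := hsum_le i
    rw [hd] at h1
    simp only [hiC, if_true] at h1
    nlinarith
  -- backward closure of maximizing set
  have hclosed : ∀ i, g i = M → ∀ j, 0 < a i j → g j = M := by
    intro i hi j hij
    have hiC := hnotC i hi
    have h1 := hkey i hi
    rw [hd] at h1
    simp only [hiC, if_false, add_zero] at h1
    have h2 : ∑ j, a i j * (M - g j) = 0 := by
      have := hsum_le i
      have hexp : ∑ j, a i j * (M - g j) = (∑ k, a i k) * M - ∑ j, a i j * g j := by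
        rw [Finset.sum_mul, ← Finset.sum_sub_distrib]
        exact Finset.sum_congr rfl fun j _ => by ring
      rw [hexp]; linarith
    have h3 : a i j * (M - g j) = 0 := by
      have := (Finset.sum_eq_zero_iff_of_nonneg (fun k _ =>
        mul_nonneg (ha_nonneg i k) (by linarith [hgM k]))).mp h2 j (Finset.mem_univ j)
      exact this
    have h4 : M - g j = 0 := by
      rcases mul_eq_zero.mp h3 with h | h
      · exact absurd h (ne_of_gt hij)
      · exact h
    linarith
  -- propagate along paths
  have hpath : ∀ r i : Fin N, Relation.ReflTransGen (fun s t => 0 < a t s) r i →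
      g i = M → g r = M := by
    intro r i h
    induction h with
    | refl => exact id
    | tail _ hedge ih => exact fun hc => ih (hclosed _ hc _ hedge)
  obtain ⟨r, hrC, hr⟩ := hreach i0
  exact hnotC r (hpath r i0 hr rfl) hrC

/-- Remark 2: for a weighted directed graph in the class `𝔾_𝒞^N` (every node
reachable by a directed path from some node of the nonempty root set `𝒞`), the
expanded Laplacian `L̄ = L + diag(ι)` is invertible and all its eigenvalues have
strictly positive real part. -/
theorem expanded_laplacian_invertible_positive_spectrum
    {N : ℕ}
    (a : Fin N → Fin N → ℝ)
    (ha_nonneg : ∀ i j, 0 ≤ a i j) (ha_diag : ∀ i, a i i = 0)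
    (𝒞 : Finset (Fin N)) (h𝒞 : 𝒞.Nonempty)
    (hreach : ∀ i : Fin N, ∃ r ∈ 𝒞, Relation.ReflTransGen (fun s t => 0 < a t s) r i) :
    IsUnit (Matrix.of (fun i j : Fin N =>
      (if i = j then (∑ k, a i k) + (if i ∈ 𝒞 then (1 : ℝ) else 0) else -(a i j)))) ∧
    ∀ μ ∈ spectrum ℂ ((Matrix.of (fun i j : Fin N =>
      (if i = j then (∑ k, a i k) + (if i ∈ 𝒞 then (1 : ℝ) else 0) else -(a i j)))).map
        Complex.ofReal), 0 < μ.re := by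
  classical
  set Lb : Matrix (Fin N) (Fin N) ℝ := Matrix.of (fun i j : Fin N =>
      (if i = j then (∑ k, a i k) + (if i ∈ 𝒞 then (1 : ℝ) else 0) else -(a i j))) with hLb
  have hspec : ∀ μ ∈ spectrum ℂ (Lb.map Complex.ofReal), 0 < μ.re := by
    intro μ hμmem
    by_contra hle
    push_neg at hle
    rw [spectrum.mem_iff, Matrix.isUnit_iff_isUnit_det, isUnit_iff_ne_zero, not_not] at hμmem
    obtain ⟨v, hv0, hv⟩ := (Matrix.exists_mulVec_eq_zero_iff).mpr hμmem
    have heig : (Lb.map Complex.ofReal).mulVec v = μ • v := by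
      rw [Matrix.sub_mulVec] at hv
      have h1 : (algebraMap ℂ (Matrix (Fin N) (Fin N) ℂ) μ).mulVec v = μ • v := by
        ext i
        simp [Algebra.algebraMap_eq_smul_one, Matrix.smul_mulVec, Matrix.one_mulVec]
      have := sub_eq_zero.mp hv
      rw [h1] at this
      exact this.symm
    exact key_no_eig a ha_nonneg ha_diag 𝒞 hreach μ hle v hv0 heig
  refine ⟨?_, hspec⟩
  rw [Matrix.isUnit_iff_isUnit_det, isUnit_iff_ne_zero]
  intro hdet0
  have hdetC : (Lb.map Complex.ofReal).det = 0 := by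
    have h := RingHom.map_det Complex.ofRealHom Lb
    rw [hdet0, RingHom.mapMatrix_apply] at h
    exact (by simpa using h.symm : (Lb.map ⇑Complex.ofRealHom).det = 0)
  obtain ⟨v, hv0, hv⟩ := (Matrix.exists_mulVec_eq_zero_iff).mpr hdetC
  have heig : (Lb.map Complex.ofReal).mulVec v = (0 : ℂ) • v := by
    rw [hv]; simp
  exact key_no_eig a ha_nonneg ha_diag 𝒞 hreach 0 le_rfl v hv0 heig

end
end

section
/- Consider a weighted directed graph on N nodes with adjacency matrix 𝒜 = [a_ij], a_ij ≥ 0, a_ii = 0, Laplacian L, nonempty root set 𝒞 with indicators ι_i, expanded Laplacian L̄ = L + diag(ι), in-degrees d_in(i) = Σ_j a_ij, D_in = diag(d_in(i)), and D̄ = I − (2I + D_in)^{-1} L̄. If the graph belongs to the class 𝔾_𝒞^N (every node is reachable by a directed path from some node of 𝒞), then every eigenvalue of D̄ lies strictly inside the unit circle, i.e. the spectral radius of D̄ is less than 1. -/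
open Matrix Filter Topology

noncomputable section

/-- The expanded Laplacian `L̄ = L + diag(ι)` of a weighted directed graph with
adjacency matrix `a` and root set `𝒞`. -/
def expandedLaplacian {N : ℕ} (a : Fin N → Fin N → ℝ) (𝒞 : Finset (Fin N)) :
    Matrix (Fin N) (Fin N) ℝ :=
  Matrix.of fun i j : Fin N =>
    if i = j then (∑ k, a i k) + (if i ∈ 𝒞 then (1 : ℝ) else 0) else -(a i j)

/-- The matrix `D̄ = I − (2I + D_in)⁻¹ L̄`. -/
def DbarMatrix {N : ℕ} (a : Fin N → Fin N → ℝ) (𝒞 : Finset (Fin N)) :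
    Matrix (Fin N) (Fin N) ℝ :=
  1 - ((2 : Matrix (Fin N) (Fin N) ℝ) + Matrix.diagonal (fun i => ∑ j, a i j))⁻¹ *
    expandedLaplacian a 𝒞

/-- Every eigenvalue of a nonnegative substochastic matrix, whose row sums are strictly
below 1 on a set `𝒞` from which every node is reachable, lies strictly inside the
unit circle. -/
lemma aux_substoch {N : ℕ} (B : Matrix (Fin N) (Fin N) ℝ) (rel : Fin N → Fin N → Prop)
    (hnn : ∀ i j, 0 ≤ B i j)
    (hrow : ∀ i, ∑ j, B i j ≤ 1)
    (𝒞 : Finset (Fin N))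
    (hstrict : ∀ i ∈ 𝒞, ∑ j, B i j < 1)
    (hedge : ∀ s t, rel s t → 0 < B t s)
    (hreach : ∀ i, ∃ r ∈ 𝒞, Relation.ReflTransGen rel r i) :
    ∀ μ ∈ spectrum ℂ (B.map Complex.ofReal), ‖μ‖ < 1 := by
  intro μ hμ
  by_contra hc
  push_neg at hc
  -- get eigenvector
  rw [spectrum.mem_iff, Matrix.isUnit_iff_isUnit_det] at hμ
  have hd : ((algebraMap ℂ (Matrix (Fin N) (Fin N) ℂ)) μ - B.map Complex.ofReal).det = 0 := by
    by_contra hne; exact hμ (isUnit_iff_ne_zero.mpr hne)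
  obtain ⟨v, hv0, hv⟩ := (Matrix.exists_mulVec_eq_zero_iff).mpr hd
  rw [Matrix.sub_mulVec, Algebra.algebraMap_eq_smul_one, Matrix.smul_mulVec,
    Matrix.one_mulVec] at hv
  have heig : ∀ i, ∑ j, (B i j : ℂ) * v j = μ * v i := by
    intro i
    have := congrFun (sub_eq_zero.mp hv).symm i
    simpa [Matrix.mulVec, dotProduct, Matrix.map_apply] using this
  -- max modulus
  obtain ⟨i1, hi1⟩ := Function.ne_iff.mp hv0
  simp only [Pi.zero_apply] at hi1
  have hne : (Finset.univ : Finset (Fin N)).Nonempty := ⟨i1, Finset.mem_univ _⟩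
  obtain ⟨i0, -, hi0⟩ := Finset.exists_max_image Finset.univ (fun i => ‖v i‖) hne
  set m : ℝ := ‖v i0‖ with hm
  have hmpos : 0 < m := lt_of_lt_of_le (norm_pos_iff.mpr hi1) (hi0 i1 (Finset.mem_univ _))
  have hle : ∀ j, ‖v j‖ ≤ m := fun j => hi0 j (Finset.mem_univ _)
  -- key claim
  have key : ∀ i, ‖v i‖ = m → i ∉ 𝒞 ∧ ∀ j, 0 < B i j → ‖v j‖ = m := by
    intro i hi
    have h1 : m ≤ ‖∑ j, (B i j : ℂ) * v j‖ := by
      rw [heig i, norm_mul, hi]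
      nlinarith [hc]
    have h2 : ‖∑ j, (B i j : ℂ) * v j‖ ≤ ∑ j, B i j * ‖v j‖ := by
      refine le_trans (norm_sum_le _ _) (le_of_eq ?_)
      refine Finset.sum_congr rfl fun j _ => ?_
      rw [norm_mul, Complex.norm_real, Real.norm_eq_abs, abs_of_nonneg (hnn i j)]
    have h3 : ∀ j, B i j * ‖v j‖ ≤ B i j * m := fun j =>
      mul_le_mul_of_nonneg_left (hle j) (hnn i j)
    have h4 : ∑ j, B i j * ‖v j‖ ≤ (∑ j, B i j) * m := by
      rw [Finset.sum_mul]
      exact Finset.sum_le_sum fun j _ => h3 j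
    have h5 : (∑ j, B i j) * m ≤ m := by
      nlinarith [hrow i]
    have hrow1 : (∑ j, B i j) = 1 := by nlinarith
    constructor
    · intro hmem
      have := hstrict i hmem
      nlinarith
    · intro j hBj
      by_contra hne'
      have hlt : B i j * ‖v j‖ < B i j * m :=
        mul_lt_mul_of_pos_left (lt_of_le_of_ne (hle j) hne') hBj
      have : ∑ k, B i k * ‖v k‖ < ∑ k, B i k * m :=
        Finset.sum_lt_sum (fun k _ => h3 k) ⟨j, Finset.mem_univ _, hlt⟩
      rw [← Finset.sum_mul, hrow1, one_mul] at this
      linarith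
  -- propagate along path
  have prop : ∀ {r b : Fin N}, Relation.ReflTransGen rel r b → ‖v b‖ = m → ‖v r‖ = m := by
    intro r b h
    induction h with
    | refl => exact id
    | tail hab hbc ih => exact fun hcm => ih ((key _ hcm).2 _ (hedge _ _ hbc))
  obtain ⟨r, hr𝒞, hpath⟩ := hreach i0
  exact (key r (prop hpath rfl)).1 hr𝒞

/-- If the graph belongs to the class `𝔾_𝒞^N` (every node reachable by a directed path
from some node of the nonempty root set `𝒞`), then every eigenvalue of
`D̄ = I − (2I + D_in)⁻¹ L̄` lies strictly inside the unit circle. -/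
theorem Dbar_spectral_radius_lt_one
    {N : ℕ}
    (a : Fin N → Fin N → ℝ)
    (ha_nonneg : ∀ i j, 0 ≤ a i j) (ha_diag : ∀ i, a i i = 0)
    (𝒞 : Finset (Fin N)) (h𝒞 : 𝒞.Nonempty)
    (hreach : ∀ i : Fin N, ∃ r ∈ 𝒞, Relation.ReflTransGen (fun s t => 0 < a t s) r i) :
    ∀ μ ∈ spectrum ℂ ((DbarMatrix a 𝒞).map Complex.ofReal), ‖μ‖ < 1 := by
  classical
  set d : Fin N → ℝ := fun i => ∑ j, a i j with hd
  set c : Fin N → ℝ := fun i => 2 + d i with hcdef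
  have hdnn : ∀ i, 0 ≤ d i := fun i => Finset.sum_nonneg fun j _ => ha_nonneg i j
  have hcpos : ∀ i, 0 < c i := fun i => by have := hdnn i; simp only [hcdef]; linarith
  have hdiag : (2 : Matrix (Fin N) (Fin N) ℝ) + Matrix.diagonal d = Matrix.diagonal c := by
    rw [show (2 : Matrix (Fin N) (Fin N) ℝ) = Matrix.diagonal (fun _ => 2) by
      simp [← Matrix.diagonal_ofNat]]
    rw [Matrix.diagonal_add]
  have hent : ∀ i j, DbarMatrix a 𝒞 i j =
      (if i = j then 2 - (if i ∈ 𝒞 then (1:ℝ) else 0) else a i j) / c i := by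
    intro i j
    rw [DbarMatrix]
    have hinv : (Matrix.diagonal c)⁻¹ = Matrix.diagonal (fun i => (c i)⁻¹) := by
      apply Matrix.inv_eq_right_inv
      rw [Matrix.diagonal_mul_diagonal]
      convert Matrix.diagonal_one using 2
      funext i
      exact mul_inv_cancel₀ (hcpos i).ne'
    rw [show (fun i => ∑ j, a i j) = d from rfl, hdiag, hinv]
    rw [Matrix.sub_apply, Matrix.diagonal_mul]
    simp only [Matrix.one_apply, expandedLaplacian, Matrix.of_apply]
    by_cases h : i = j
    · subst h
      simp only [if_pos rfl, if_true]
      have hne : (2 + ∑ k, a i k) ≠ 0 := (hcpos i).ne'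
      rw [show c i = 2 + ∑ k, a i k from rfl]
      field_simp
      ring
    · simp only [if_neg h]
      have hne : (2 + ∑ k, a i k) ≠ 0 := (hcpos i).ne'
      field_simp
      ring
  have hsum : ∀ (i : Fin N) (X : ℝ), ∑ j, (if i = j then X else a i j) = X + d i := by
    intro i X
    have : ∀ j, (if i = j then X else a i j) = (if i = j then X - a i j else 0) + a i j := by
      intro j
      by_cases h : i = j
      · subst h; simp [ha_diag i]
      · simp [h]
    rw [Finset.sum_congr rfl fun j _ => this j, Finset.sum_add_distrib, Finset.sum_ite_eq]
    simp [ha_diag i, hd]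
  have hrowsum : ∀ i, ∑ j, DbarMatrix a 𝒞 i j
      = 1 - (if i ∈ 𝒞 then (1:ℝ) else 0) / c i := by
    intro i
    rw [Finset.sum_congr rfl fun j _ => hent i j, ← Finset.sum_div, hsum i]
    have hne : c i ≠ 0 := (hcpos i).ne'
    have hci : c i = 2 + d i := rfl
    field_simp
    linarith
  apply aux_substoch (DbarMatrix a 𝒞) (fun s t => 0 < a t s) _ _ 𝒞 _ _ hreach
  · intro i j
    rw [hent]
    refine div_nonneg ?_ (hcpos i).le
    by_cases h : i = j
    · simp only [if_pos h]; split <;> norm_num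
    · simp only [if_neg h]; exact ha_nonneg i j
  · intro i
    rw [hrowsum]
    have h0 : (0:ℝ) ≤ (if i ∈ 𝒞 then (1:ℝ) else 0) / c i :=
      div_nonneg (by split <;> norm_num) (hcpos i).le
    linarith
  · intro i hi
    rw [hrowsum, if_pos hi]
    have h0 : (0:ℝ) < 1 / c i := one_div_pos.mpr (hcpos i)
    linarith
  · intro s t hst
    have hts : t ≠ s := by
      intro h
      rw [h] at hst
      rw [ha_diag s] at hst
      exact lt_irrefl 0 hst
    rw [hent, if_neg hts]
    exact div_pos hst (hcpos t)

end
end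

section
/- Let D = [d_ij] ∈ ℝ^{N×N} be a matrix with nonnegative entries whose spectral radius is strictly less than 1, let Ā ∈ ℝ^{q×q} be a matrix all of whose eigenvalues lie in the closed unit disc, and let κ_ij ∈ ℤ_{≥0} with κ_ii = 0 be arbitrary delays. Then the networked time-delay system δ_i(k+1) = Σ_{j=1}^{N} d_ij Ā δ_j(k − κ_ij), i = 1, …, N, with δ_i(k) ∈ ℝ^q, is asymptotically stable: every collection of functions δ_i : ℤ → ℝ^q satisfying the recursion for all k ≥ 0 (with arbitrary given values for k ≤ 0) satisfies δ_i(k) → 0 as k → ∞ for every i. -/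
open Matrix Filter Topology
open scoped ENNReal NNReal

noncomputable section

namespace NetDelayAux

attribute [local instance] Matrix.linftyOpNormedAddCommGroup Matrix.linftyOpNormedRing
  Matrix.linftyOpNormedAlgebra

/-- Gelfand-type bound: spectral radius below `t` gives a geometric norm bound. -/
lemma gelfand_bound {n : ℕ} (A : Matrix (Fin n) (Fin n) ℂ) {t : ℝ} (ht0 : 0 < t)
    (ht : spectralRadius ℂ A < ENNReal.ofReal t) :
    ∃ C : ℝ, 1 ≤ C ∧ ∀ m : ℕ, ‖A ^ m‖ ≤ C * t ^ m := by
  have hgel := spectrum.pow_nnnorm_pow_one_div_tendsto_nhds_spectralRadius A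
  have hev : ∀ᶠ m : ℕ in atTop, (‖A ^ m‖₊ : ℝ≥0∞) ^ (1 / (m : ℝ)) < ENNReal.ofReal t :=
    hgel.eventually_lt_const ht
  obtain ⟨m₀, hm₀⟩ := eventually_atTop.mp hev
  have key : ∀ m : ℕ, max m₀ 1 ≤ m → ‖A ^ m‖ ≤ t ^ m := by
    intro m hm
    have h1 : 1 ≤ m := le_trans (le_max_right _ _) hm
    have hm' : (0 : ℝ) < m := by exact_mod_cast h1
    have h3 := ENNReal.rpow_lt_rpow (hm₀ m (le_trans (le_max_left _ _) hm)) hm'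
    rw [← ENNReal.rpow_mul, one_div, inv_mul_cancel₀ (ne_of_gt hm'), ENNReal.rpow_one] at h3
    rw [ENNReal.ofReal_rpow_of_pos ht0, ← enorm_eq_nnnorm, ← ofReal_norm,
      ENNReal.ofReal_lt_ofReal_iff (Real.rpow_pos_of_pos ht0 _)] at h3
    calc ‖A ^ m‖ ≤ t ^ (m : ℝ) := h3.le
    _ = t ^ m := Real.rpow_natCast t m
  refine ⟨1 + ∑ j ∈ Finset.range (max m₀ 1), ‖A ^ j‖ / t ^ j, ?_, ?_⟩
  · have : (0:ℝ) ≤ ∑ j ∈ Finset.range (max m₀ 1), ‖A ^ j‖ / t ^ j :=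
      Finset.sum_nonneg fun j _ => div_nonneg (norm_nonneg _) (pow_nonneg ht0.le _)
    linarith
  · intro m
    by_cases h : max m₀ 1 ≤ m
    · refine (key m h).trans ?_
      have hC : (1:ℝ) ≤ 1 + ∑ j ∈ Finset.range (max m₀ 1), ‖A ^ j‖ / t ^ j := by
        have : (0:ℝ) ≤ ∑ j ∈ Finset.range (max m₀ 1), ‖A ^ j‖ / t ^ j :=
          Finset.sum_nonneg fun j _ => div_nonneg (norm_nonneg _) (pow_nonneg ht0.le _)
        linarith
      exact le_mul_of_one_le_left (pow_nonneg ht0.le m) hC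
    · push_neg at h
      have hmem : m ∈ Finset.range (max m₀ 1) := Finset.mem_range.mpr h
      have h1 : ‖A ^ m‖ / t ^ m ≤ ∑ j ∈ Finset.range (max m₀ 1), ‖A ^ j‖ / t ^ j :=
        Finset.single_le_sum (f := fun j => ‖A ^ j‖ / t ^ j)
          (fun j _ => div_nonneg (norm_nonneg _) (pow_nonneg ht0.le _)) hmem
      have htm : (0:ℝ) < t ^ m := pow_pos ht0 m
      calc ‖A ^ m‖ = ‖A ^ m‖ / t ^ m * t ^ m := (div_mul_cancel₀ _ (ne_of_gt htm)).symm
      _ ≤ (1 + ∑ j ∈ Finset.range (max m₀ 1), ‖A ^ j‖ / t ^ j) * t ^ m := by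
        apply mul_le_mul_of_nonneg_right _ htm.le
        linarith
  
lemma map_ofReal_pow {n : ℕ} (A : Matrix (Fin n) (Fin n) ℝ) (m : ℕ) :
    (A.map Complex.ofReal) ^ m = (A ^ m).map Complex.ofReal := by
  have : A.map Complex.ofReal = Complex.ofRealHom.mapMatrix A := rfl
  rw [this, ← map_pow]; rfl

lemma norm_map_ofReal {k l : ℕ} (A : Matrix (Fin k) (Fin l) ℝ) :
    ‖A.map Complex.ofReal‖ = ‖A‖ := by
  rw [Matrix.linfty_opNorm_def, Matrix.linfty_opNorm_def]
  congr 1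
  apply Finset.sup_congr rfl
  intro i _
  congr 1
  ext j
  simp [Matrix.map_apply]

end NetDelayAux

open NetDelayAux

attribute [local instance] Matrix.linftyOpNormedAddCommGroup Matrix.linftyOpNormedRing
  Matrix.linftyOpNormedAlgebra

set_option maxHeartbeats 1000000 in
/-- Asymptotic stability of the networked time-delay system
`δ_i(k+1) = ∑_j d_ij Ā δ_j(k − κ_ij)`: if `D = [d_ij]` is nonnegative with spectral
radius strictly less than 1 and all eigenvalues of `Ā` lie in the closed unit disc,
then for arbitrary delays `κ_ij ∈ ℤ_{≥0}` with `κ_ii = 0`, every solution (defined on ℤ,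
satisfying the recursion for all `k ≥ 0`, with arbitrary initial history) tends to 0. -/
theorem networked_delay_system_asymptotically_stable
    {N q : ℕ}
    (D : Matrix (Fin N) (Fin N) ℝ)
    (hD_nonneg : ∀ i j, 0 ≤ D i j)
    (hD_spec : ∀ μ ∈ spectrum ℂ (D.map Complex.ofReal), ‖μ‖ < 1)
    (Abar : Matrix (Fin q) (Fin q) ℝ)
    (hAbar : ∀ μ ∈ spectrum ℂ (Abar.map Complex.ofReal), ‖μ‖ ≤ 1)
    (κ : Fin N → Fin N → ℕ) (hκ : ∀ i, κ i i = 0)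
    (δ : Fin N → ℤ → Fin q → ℝ)
    (hδ : ∀ i (k : ℤ), 0 ≤ k →
      δ i (k + 1) = ∑ j, D i j • Abar.mulVec (δ j (k - (κ i j : ℤ)))) :
    ∀ i, Tendsto (fun k : ℕ => δ i (k : ℤ)) atTop (𝓝 0) := by
  intro i₀
  haveI : Nonempty (Fin N) := ⟨i₀⟩
  -- a radius bound for D
  have hfin := Matrix.finite_spectrum (D.map Complex.ofReal)
  have hne : (spectrum ℂ (D.map Complex.ofReal)).Nonempty := spectrum.nonempty _
  set S : Finset ℝ := hfin.toFinset.image (fun μ => ‖μ‖) with hS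
  have hSne : S.Nonempty := by
    obtain ⟨μ, hμ⟩ := hne
    exact ⟨‖μ‖, Finset.mem_image_of_mem _ (hfin.mem_toFinset.mpr hμ)⟩
  set rD : ℝ := max (S.max' hSne) 0 with hrD
  have hrD0 : 0 ≤ rD := le_max_right _ _
  have hrD1 : rD < 1 := by
    apply max_lt _ one_pos
    apply (S.max'_lt_iff hSne).mpr
    rintro y hy
    obtain ⟨μ, hμ, rfl⟩ := Finset.mem_image.mp hy
    exact hD_spec μ (hfin.mem_toFinset.mp hμ)
  have hrD_bound : ∀ μ ∈ spectrum ℂ (D.map Complex.ofReal), ‖μ‖ ≤ rD := by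
    intro μ hμ
    exact le_max_of_le_left (S.le_max' _ (Finset.mem_image_of_mem _ (hfin.mem_toFinset.mpr hμ)))
  -- choose radii
  set r' : ℝ := (rD + 1) / 2 with hr'
  set r : ℝ := (r' + 1) / 2 with hr
  have hr'0 : 0 < r' := by positivity
  have hr'1 : r' < 1 := by rw [hr']; linarith
  have hr'r : r' < r := by rw [hr]; linarith
  have hr0 : 0 < r := by positivity
  have hr1 : r < 1 := by rw [hr]; linarith
  set s : ℝ := (1 + r⁻¹) / 2 with hs
  have hs1 : 1 < s := by
    have : 1 < r⁻¹ := (one_lt_inv₀ hr0).mpr hr1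
    rw [hs]; linarith
  have hs0 : 0 < s := by linarith
  have hrs0 : 0 < r * s := by positivity
  have hrs1 : r * s < 1 := by
    have : r * s = (r + 1) / 2 := by
      rw [hs]; field_simp
    rw [this]; linarith
  -- Gelfand bounds
  have hspecD : spectralRadius ℂ (D.map Complex.ofReal) < ENNReal.ofReal r' := by
    refine lt_of_le_of_lt (a := spectralRadius ℂ (D.map Complex.ofReal))
      (b := ENNReal.ofReal rD) ?_ ?_
    · rw [spectralRadius]
      refine iSup₂_le fun μ hμ => ?_
      rw [ENNReal.ofReal, ENNReal.coe_le_coe, ← Real.toNNReal_coe (r := ‖μ‖₊)]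
      exact Real.toNNReal_le_toNNReal (hrD_bound μ hμ)
    · exact (ENNReal.ofReal_lt_ofReal_iff hr'0).mpr (by linarith)
  have hspecA : spectralRadius ℂ (Abar.map Complex.ofReal) < ENNReal.ofReal s := by
    refine lt_of_le_of_lt (b := ENNReal.ofReal 1) ?_ ?_
    · rw [spectralRadius]
      refine iSup₂_le fun μ hμ => ?_
      rw [ENNReal.ofReal, ENNReal.coe_le_coe, ← Real.toNNReal_coe (r := ‖μ‖₊)]
      exact Real.toNNReal_le_toNNReal (hAbar μ hμ)
    · exact (ENNReal.ofReal_lt_ofReal_iff hs0).mpr hs1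
  clear_value S rD r' r s
  clear hS hrD hr' hr hs hrD1 hrD_bound hrD0 hne hfin hSne S rD
  obtain ⟨CD, hCD1, hCDb⟩ := gelfand_bound (D.map Complex.ofReal) hr'0 hspecD
  obtain ⟨CA, hCA1, hCAb⟩ := gelfand_bound (Abar.map Complex.ofReal) hs0 hspecA
  have hDm : ∀ m : ℕ, ‖D ^ m‖ ≤ CD * r' ^ m := by
    intro m; rw [← norm_map_ofReal, ← map_ofReal_pow]; exact hCDb m
  have hAm : ∀ m : ℕ, ‖Abar ^ m‖ ≤ CA * s ^ m := by
    intro m; rw [← norm_map_ofReal, ← map_ofReal_pow]; exact hCAb m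
  -- nonnegativity of powers of D and row sums
  have hDpow : ∀ (m : ℕ) (i j : Fin N), 0 ≤ (D ^ m) i j := by
    intro m
    induction m with
    | zero =>
      intro i j
      rw [pow_zero]
      rcases eq_or_ne i j with h | h
      · simp [Matrix.one_apply, h]
      · simp [Matrix.one_apply, h]
    | succ m ih =>
      intro i j
      rw [pow_succ, Matrix.mul_apply]
      exact Finset.sum_nonneg fun l _ => mul_nonneg (ih i l) (hD_nonneg l j)
  set w : ℕ → Fin N → ℝ := fun m i => ∑ j, (D ^ m) i j with hw
  have hw_nonneg : ∀ m i, 0 ≤ w m i :=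
    fun m i => Finset.sum_nonneg fun j _ => hDpow m i j
  have hw_le : ∀ m i, w m i ≤ ‖D ^ m‖ := by
    intro m i
    rw [Matrix.linfty_opNorm_def]
    calc w m i ≤ ∑ j, ‖(D ^ m) i j‖ := Finset.sum_le_sum fun j _ => le_abs_self _
    _ = ((∑ j, ‖(D ^ m) i j‖₊ : NNReal) : ℝ) := by push_cast; rfl
    _ ≤ _ := by
      exact_mod_cast Finset.le_sup (f := fun i => ∑ j, ‖(D ^ m) i j‖₊) (Finset.mem_univ i)
  have hsum : ∀ i, Summable (fun m : ℕ => r⁻¹ ^ m * w m i) := by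
    intro i
    refine Summable.of_nonneg_of_le (f := fun m => CD * (r' / r) ^ m)
      (fun m => mul_nonneg (pow_nonneg (by positivity) m) (hw_nonneg m i))
      (fun m => ?_) ?_
    · calc r⁻¹ ^ m * w m i ≤ r⁻¹ ^ m * (CD * r' ^ m) := by
            apply mul_le_mul_of_nonneg_left ((hw_le m i).trans (hDm m))
              (pow_nonneg (by positivity) m)
      _ = CD * (r' / r) ^ m := by rw [div_pow, inv_pow]; field_simp
    · apply Summable.mul_left
      apply summable_geometric_of_lt_one (by positivity)
      rw [div_lt_one hr0]; exact hr'r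
  set v : Fin N → ℝ := fun i => ∑' m : ℕ, r⁻¹ ^ m * w m i with hv
  have hw0 : ∀ i, w 0 i = 1 := by
    intro i
    simp [hw, Matrix.one_apply]
  have hv1 : ∀ i, 1 ≤ v i := by
    intro i
    have h0 : r⁻¹ ^ 0 * w 0 i = 1 := by simp [hw0]
    calc (1:ℝ) = r⁻¹ ^ 0 * w 0 i := h0.symm
    _ ≤ v i := Summable.le_tsum (hsum i) 0
        (fun m _ => mul_nonneg (pow_nonneg (by positivity) m) (hw_nonneg m i))
  have hv0 : ∀ i, 0 ≤ v i := fun i => zero_le_one.trans (hv1 i)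
  have hw_succ : ∀ m i, ∑ j, D i j * w m j = w (m + 1) i := by
    intro m i
    rw [hw]
    simp only
    rw [pow_succ']
    simp_rw [Matrix.mul_apply, Finset.mul_sum]
    rw [Finset.sum_comm]
  have hvD : ∀ i, ∑ j, D i j * v j ≤ r * v i := by
    intro i
    have key : ∑ j, D i j * v j = ∑' m : ℕ, r⁻¹ ^ m * w (m + 1) i := by
      calc ∑ j, D i j * v j = ∑ j, ∑' m : ℕ, D i j * (r⁻¹ ^ m * w m j) := by
            refine Finset.sum_congr rfl fun j _ => ?_
            rw [hv]
            exact (tsum_mul_left).symm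
      _ = ∑' m : ℕ, ∑ j, D i j * (r⁻¹ ^ m * w m j) :=
            (Summable.tsum_finsetSum (fun j _ => (hsum j).mul_left _)).symm
      _ = ∑' m : ℕ, r⁻¹ ^ m * w (m + 1) i := by
            refine tsum_congr fun m => ?_
            rw [← hw_succ m i, Finset.mul_sum]
            exact Finset.sum_congr rfl fun j _ => by ring
    have h2 : r * v i = r + ∑' m : ℕ, r⁻¹ ^ m * w (m + 1) i := by
      rw [hv]
      simp only
      rw [Summable.tsum_eq_zero_add (hsum i), mul_add]
      congr 1
      · simp [hw0]
      · rw [← tsum_mul_left]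
        refine tsum_congr fun m => ?_
        have : r * r⁻¹ = 1 := mul_inv_cancel₀ (ne_of_gt hr0)
        calc r * (r⁻¹ ^ (m + 1) * w (m + 1) i) = (r * r⁻¹) * (r⁻¹ ^ m * w (m + 1) i) := by
              rw [pow_succ]; ring
        _ = r⁻¹ ^ m * w (m + 1) i := by rw [this, one_mul]
    rw [key, h2]
    exact le_add_of_nonneg_left hr0.le
  clear_value v
  clear hv hw hw0 hw_succ hw_le hw_nonneg hsum hDpow hDm hCDb hCD1 hspecD hspecA hCAb w CD
  -- the maximal delay
  set K : ℕ := Finset.univ.sup fun i : Fin N => Finset.univ.sup fun j : Fin N => κ i j with hK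
  have hκK : ∀ i j, κ i j ≤ K := by
    intro i j
    exact le_trans (Finset.le_sup (Finset.mem_univ j))
      (Finset.le_sup (f := fun i : Fin N => Finset.univ.sup fun j : Fin N => κ i j)
        (Finset.mem_univ i))
  clear_value K
  clear hK
  -- the decay rate
  set θ : ℝ := (r * s) ^ (((K + 1 : ℕ) : ℝ)⁻¹) with hθ
  have hθ0 : 0 < θ := Real.rpow_pos_of_pos hrs0 _
  have hθ1 : θ < 1 := Real.rpow_lt_one hrs0.le hrs1 (by positivity)
  have hθpow : θ ^ (K + 1) = r * s := Real.rpow_inv_natCast_pow hrs0.le (Nat.succ_ne_zero K)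
  clear_value θ
  clear hθ
  -- bound on the initial data
  set M0 : ℝ := ∑ i, ∑ j : Fin (K + 1), ‖δ i (-(j : ℤ))‖ with hM0def
  have hM0nonneg : 0 ≤ M0 :=
    Finset.sum_nonneg fun i _ => Finset.sum_nonneg fun j _ => norm_nonneg _
  have hM0 : ∀ (i : Fin N) (t : ℤ), -(K : ℤ) ≤ t → t ≤ 0 → ‖δ i t‖ ≤ M0 := by
    intro i t ht1 ht2
    have hlt : (-t).toNat < K + 1 := by omega
    have hjt : -((⟨(-t).toNat, hlt⟩ : Fin (K + 1)) : ℤ) = t := by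
      simp only []
      omega
    calc ‖δ i t‖ = ‖δ i (-((⟨(-t).toNat, hlt⟩ : Fin (K + 1)) : ℤ))‖ := by rw [hjt]
    _ ≤ ∑ j : Fin (K + 1), ‖δ i (-(j : ℤ))‖ :=
        Finset.single_le_sum (f := fun j : Fin (K + 1) => ‖δ i (-(j : ℤ))‖)
          (fun j _ => norm_nonneg _) (Finset.mem_univ _)
    _ ≤ M0 := Finset.single_le_sum (f := fun i => ∑ j : Fin (K + 1), ‖δ i (-(j : ℤ))‖)
        (fun i _ => Finset.sum_nonneg fun j _ => norm_nonneg _) (Finset.mem_univ i)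
  set M : ℝ := (M0 + 1) / θ ^ K with hMdef
  have hMpos : 0 < M := by positivity
  have hMθ : M * θ ^ K = M0 + 1 := div_mul_cancel₀ _ (by positivity)
  clear_value M0 M
  clear hM0def hMdef
  -- the main inductive bound
  have main : ∀ n : ℕ, ∀ (m : ℕ) (i : Fin N),
      ‖(Abar ^ m) *ᵥ (δ i ((n : ℤ) - (K : ℤ)))‖ ≤ M * CA * s ^ m * v i * θ ^ n := by
    intro n
    induction n using Nat.strong_induction_on with
    | _ n IH =>
      intro m i
      by_cases hn : n ≤ K
      · -- base case: time instant in the initial window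
        have h1 : M0 ≤ M * v i * θ ^ n := by
          have hθKn : θ ^ K ≤ θ ^ n := pow_le_pow_of_le_one hθ0.le hθ1.le hn
          calc M0 ≤ M0 + 1 := by linarith
          _ = M * θ ^ K := hMθ.symm
          _ ≤ M * θ ^ n := mul_le_mul_of_nonneg_left hθKn hMpos.le
          _ ≤ M * θ ^ n * v i := le_mul_of_one_le_right (by positivity) (hv1 i)
          _ = M * v i * θ ^ n := by ring
        calc ‖(Abar ^ m) *ᵥ (δ i ((n : ℤ) - (K : ℤ)))‖
            ≤ ‖Abar ^ m‖ * ‖δ i ((n : ℤ) - (K : ℤ))‖ := Matrix.linfty_opNorm_mulVec _ _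
        _ ≤ (CA * s ^ m) * M0 := by
            apply mul_le_mul (hAm m) (hM0 i _ (by omega) (by omega)) (norm_nonneg _)
            positivity
        _ ≤ (CA * s ^ m) * (M * v i * θ ^ n) :=
            mul_le_mul_of_nonneg_left h1 (by positivity)
        _ = M * CA * s ^ m * v i * θ ^ n := by ring
      · -- inductive step
        push_neg at hn
        have hKn : K + 1 ≤ n := hn
        set k : ℤ := (n : ℤ) - (K : ℤ) - 1 with hkdef
        have hk0 : 0 ≤ k := by omega
        have hnk : (n : ℤ) - (K : ℤ) = k + 1 := by omega
        rw [hnk, hδ i k hk0]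
        have expand : (Abar ^ m) *ᵥ (∑ j, D i j • (Abar *ᵥ (δ j (k - (κ i j : ℤ)))))
            = ∑ j, D i j • ((Abar ^ (m + 1)) *ᵥ (δ j (k - (κ i j : ℤ)))) := by
          simp only [← Matrix.mulVecLin_apply]
          rw [map_sum]
          refine Finset.sum_congr rfl fun j _ => ?_
          rw [_root_.map_smul]
          congr 1
          rw [pow_succ, Matrix.mulVecLin_mul, LinearMap.comp_apply]
        rw [expand]
        have hIH : ∀ j : Fin N, ‖(Abar ^ (m + 1)) *ᵥ (δ j (k - (κ i j : ℤ)))‖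
            ≤ M * CA * s ^ (m + 1) * v j * θ ^ (n - 1 - κ i j) := by
          intro j
          have hlt : n - 1 - κ i j < n := by omega
          have hcast : ((n - 1 - κ i j : ℕ) : ℤ) - (K : ℤ) = k - (κ i j : ℤ) := by
            have := hκK i j
            omega
          have := IH (n - 1 - κ i j) hlt (m + 1) j
          rwa [hcast] at this
        calc ‖∑ j, D i j • ((Abar ^ (m + 1)) *ᵥ (δ j (k - (κ i j : ℤ))))‖
            ≤ ∑ j, ‖D i j • ((Abar ^ (m + 1)) *ᵥ (δ j (k - (κ i j : ℤ))))‖ :=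
              norm_sum_le _ _
        _ = ∑ j, D i j * ‖(Abar ^ (m + 1)) *ᵥ (δ j (k - (κ i j : ℤ)))‖ := by
              refine Finset.sum_congr rfl fun j _ => ?_
              rw [norm_smul, Real.norm_eq_abs, abs_of_nonneg (hD_nonneg i j)]
        _ ≤ ∑ j, D i j * (M * CA * s ^ (m + 1) * v j * θ ^ (n - 1 - κ i j)) :=
              Finset.sum_le_sum fun j _ =>
                mul_le_mul_of_nonneg_left (hIH j) (hD_nonneg i j)
        _ ≤ ∑ j, D i j * (M * CA * s ^ (m + 1) * v j * θ ^ (n - 1 - K)) := by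
              refine Finset.sum_le_sum fun j _ => ?_
              refine mul_le_mul_of_nonneg_left ?_ (hD_nonneg i j)
              refine mul_le_mul_of_nonneg_left
                (pow_le_pow_of_le_one hθ0.le hθ1.le (by have := hκK i j; omega)) ?_
              have := hv0 j
              positivity
        _ = (M * CA * s ^ m) * (s * θ ^ (n - 1 - K)) * (∑ j, D i j * v j) := by
              rw [Finset.mul_sum]
              refine Finset.sum_congr rfl fun j _ => ?_
              rw [pow_succ]
              ring
        _ ≤ (M * CA * s ^ m) * (s * θ ^ (n - 1 - K)) * (r * v i) := by
              refine mul_le_mul_of_nonneg_left (hvD i) ?_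
              positivity
        _ = M * CA * s ^ m * v i * (θ ^ (n - 1 - K) * (r * s)) := by ring
        _ = M * CA * s ^ m * v i * θ ^ n := by
              rw [← hθpow, ← pow_add]
              congr 2
              omega
  -- conclusion
  have final : ∀ k : ℕ, ‖δ i₀ (k : ℤ)‖ ≤ (M * CA * v i₀ * θ ^ K) * θ ^ k := by
    intro k
    have h := main (k + K) 0 i₀
    rw [pow_zero, Matrix.one_mulVec] at h
    have hcast : ((k + K : ℕ) : ℤ) - (K : ℤ) = (k : ℤ) := by push_cast; ring
    rw [hcast] at h
    calc ‖δ i₀ (k : ℤ)‖ ≤ M * CA * s ^ 0 * v i₀ * θ ^ (k + K) := h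
    _ = (M * CA * v i₀ * θ ^ K) * θ ^ k := by rw [pow_add, pow_zero]; ring
  rw [tendsto_zero_iff_norm_tendsto_zero]
  refine squeeze_zero (fun k => norm_nonneg _) final ?_
  have h := tendsto_pow_atTop_nhds_zero_of_lt_one hθ0.le hθ1
  simpa using h.const_mul (M * CA * v i₀ * θ ^ K)

end
end

section
/- Let M₁ ∈ ℝ^{q×n} and M₂ ∈ ℝ^{q×m} be such that the matrix [M₁ M₂] ∈ ℝ^{q×(n+m)} has full row rank q and M₁ has full column rank n (so n ≤ q ≤ n + m). Then there exists an injective matrix V ∈ ℝ^{m×(q−n)} such that the square matrix [M₁, M₂V] ∈ ℝ^{q×q} is invertible. In particular, if [[A−I, B],[C, 0]] ∈ ℝ^{(n+p)×(n+m)} has full row rank n+p and [A−I; C] has full column rank n, then there exists an injective V ∈ ℝ^{m×p} such that [[A−I, BV],[C, 0]] is invertible. -/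
open Matrix Filter Topology

noncomputable section

open Module in
private lemma aux_completion {Q N M : Type*} [Fintype Q] [Fintype N] [Fintype M]
    [DecidableEq Q] [DecidableEq N] [DecidableEq M]
    (r : ℕ) (M₁ : Matrix Q N ℝ) (M₂ : Matrix Q M ℝ)
    (hr : Fintype.card N + r = Fintype.card Q)
    (hrow : (Matrix.fromCols M₁ M₂).rank = Fintype.card Q)
    (hcol : M₁.rank = Fintype.card N) :
    ∃ V : Matrix M (Fin r) ℝ, Function.Injective V.mulVec ∧
      ∃ T : Matrix (N ⊕ Fin r) Q ℝ,
        Matrix.fromCols M₁ (M₂ * V) * T = 1 ∧ T * Matrix.fromCols M₁ (M₂ * V) = 1 := by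
  classical
  set f := M₁.mulVecLin with hf
  set g := M₂.mulVecLin with hg
  set F := LinearMap.range f with hF
  set G := LinearMap.range g with hG
  -- range of the combined matrix is F ⊔ G
  have hrange : LinearMap.range (Matrix.fromCols M₁ M₂).mulVecLin = F ⊔ G := by
    apply le_antisymm
    · rintro _ ⟨x, rfl⟩
      rw [Matrix.mulVecLin_apply, ← Sum.elim_comp_inl_inr x,
        Matrix.fromCols_mulVec_sumElim]
      exact Submodule.add_mem _ (Submodule.mem_sup_left ⟨_, rfl⟩)
        (Submodule.mem_sup_right ⟨_, rfl⟩)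
    · rw [sup_le_iff]
      constructor
      · rintro _ ⟨x, rfl⟩
        refine ⟨Sum.elim x 0, ?_⟩
        simp [Matrix.fromCols_mulVec_sumElim, f]
      · rintro _ ⟨y, rfl⟩
        refine ⟨Sum.elim 0 y, ?_⟩
        simp [Matrix.fromCols_mulVec_sumElim, g]
  have hFG : F ⊔ G = ⊤ := by
    apply Submodule.eq_top_of_finrank_eq
    rw [← hrange, Module.finrank_fintype_fun_eq_card, ← hrow]
    rfl
  -- complement of F ⊓ G inside G
  obtain ⟨W₀, hW₀⟩ := Submodule.exists_isCompl (Submodule.comap G.subtype F)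
  set W : Submodule ℝ (Q → ℝ) := W₀.map G.subtype with hWdef
  have hWG : W ≤ G := by
    rintro _ ⟨w, _, rfl⟩; exact w.2
  have hmap_sup : F ⊓ G ⊔ W = G := by
    have := congrArg (Submodule.map G.subtype) hW₀.sup_eq_top
    rwa [Submodule.map_sup, Submodule.map_comap_subtype, Submodule.map_subtype_top,
      inf_comm] at this
  have hFW_top : F ⊔ W = ⊤ := by
    have h2 : F ⊔ (F ⊓ G ⊔ W) = F ⊔ W := by
      rw [← sup_assoc, sup_inf_self]
    rw [← h2, hmap_sup, hFG]
  have hFW_bot : F ⊓ W = ⊥ := by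
    rw [eq_bot_iff]
    rintro x ⟨hxF, hxW⟩
    have hxG : x ∈ G := hWG hxW
    obtain ⟨w, hw, rfl⟩ := hxW
    have : w ∈ Submodule.comap G.subtype F ⊓ W₀ := ⟨hxF, hw⟩
    rw [hW₀.inf_eq_bot, Submodule.mem_bot] at this
    simp [this]
  have hrkF : Module.finrank ℝ F = Fintype.card N := by
    rw [← hcol]; rfl
  have hrkW : Module.finrank ℝ W = r := by
    have h1 := Submodule.finrank_sup_add_finrank_inf_eq F W
    rw [hFW_top, hFW_bot] at h1
    simp only [finrank_top, finrank_bot, Module.finrank_fintype_fun_eq_card,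
      add_zero, hrkF] at h1
    omega
  -- basis of W, preimages under g
  let b : Basis (Fin r) ℝ W := Module.finBasisOfFinrankEq ℝ W hrkW
  have hbG : ∀ i, ((b i : Q → ℝ)) ∈ G := fun i => hWG (b i).2
  choose v hv using fun i => hbG i
  set V : Matrix M (Fin r) ℝ := Matrix.of (fun j i => v i j) with hVdef
  have hVmul : ∀ c : Fin r → ℝ, V.mulVec c = ∑ i, c i • v i := by
    intro c
    funext j
    simp [Matrix.mulVec, dotProduct, Finset.sum_apply, hVdef, mul_comm]
  have hM₂V : ∀ c : Fin r → ℝ, (M₂ * V).mulVec c = ∑ i, c i • (b i : Q → ℝ) := by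
    intro c
    rw [← Matrix.mulVec_mulVec, hVmul]
    calc M₂.mulVec (∑ i, c i • v i) = g (∑ i, c i • v i) := rfl
    _ = ∑ i, c i • g (v i) := by rw [map_sum]; simp
    _ = ∑ i, c i • (b i : Q → ℝ) := by simp [hv]
  set S : Matrix Q (N ⊕ Fin r) ℝ := Matrix.fromCols M₁ (M₂ * V) with hSdef
  -- S is surjective as a linear map
  have hsurj : Function.Surjective S.mulVecLin := by
    intro w
    have hw : w ∈ F ⊔ W := by rw [hFW_top]; trivial
    obtain ⟨u, huF, w', hw'W, rfl⟩ := Submodule.mem_sup.mp hw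
    obtain ⟨x₀, rfl⟩ := huF
    set c : Fin r → ℝ := fun i => b.repr ⟨w', hw'W⟩ i with hc
    refine ⟨Sum.elim x₀ c, ?_⟩
    rw [Matrix.mulVecLin_apply, hSdef, Matrix.fromCols_mulVec_sumElim, hM₂V]
    congr 1
    have := b.sum_repr ⟨w', hw'W⟩
    calc (∑ i, c i • (b i : Q → ℝ)) = ((∑ i, c i • b i : W) : Q → ℝ) := by
          simp
    _ = w' := by rw [this]
  have hcard : Module.finrank ℝ ((N ⊕ Fin r) → ℝ) = Module.finrank ℝ (Q → ℝ) := by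
    simp [Module.finrank_fintype_fun_eq_card, hr]
  have hinj : Function.Injective S.mulVecLin :=
    (LinearMap.injective_iff_surjective_of_finrank_eq_finrank hcard).mpr hsurj
  have htl : Matrix.toLin' S = S.mulVecLin := by
    ext x; simp [Matrix.toLin'_apply, Matrix.mulVecLin_apply]
  have hbij : Function.Bijective (Matrix.toLin' S) := by
    rw [htl]; exact ⟨hinj, hsurj⟩
  let e := LinearEquiv.ofBijective _ hbij
  set T : Matrix (N ⊕ Fin r) Q ℝ := LinearMap.toMatrix' (e.symm : (Q → ℝ) →ₗ[ℝ] ((N ⊕ Fin r) → ℝ)) with hTdef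
  have hST : S * T = 1 := by
    apply Matrix.toLin'.injective
    rw [Matrix.toLin'_mul, hTdef, Matrix.toLin'_toMatrix', Matrix.toLin'_one]
    refine LinearMap.ext fun x => ?_
    exact e.apply_symm_apply x
  have hTS : T * S = 1 := by
    apply Matrix.toLin'.injective
    rw [Matrix.toLin'_mul, hTdef, Matrix.toLin'_toMatrix', Matrix.toLin'_one]
    refine LinearMap.ext fun x => ?_
    exact e.symm_apply_apply x
  refine ⟨V, ?_, T, hST, hTS⟩
  -- injectivity of V.mulVec from invertibility
  intro x y hxy
  have hS : S.mulVec (Sum.elim 0 x) = S.mulVec (Sum.elim 0 y) := by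
    rw [hSdef, Matrix.fromCols_mulVec_sumElim, Matrix.fromCols_mulVec_sumElim,
      ← Matrix.mulVec_mulVec, ← Matrix.mulVec_mulVec, hxy]
  have hSinj : Function.Injective S.mulVec := hinj
  have := hSinj hS
  have := congrFun this
  funext i
  simpa using this (Sum.inr i)

/-- If `[M₁ M₂]` has full row rank `q` and `M₁` has full column rank `n`, then there is
an injective `V ∈ ℝ^{m×(q−n)}` such that the square matrix `[M₁, M₂V]` is invertible.
In particular, if `[[A−I, B],[C, 0]]` has full row rank `n+p` and `[A−I; C]` has full
column rank `n`, then there exists an injective `V ∈ ℝ^{m×p}` such that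
`[[A−I, BV],[C, 0]]` is invertible. -/
theorem exists_injective_V_completion
    {q n m : ℕ}
    (M₁ : Matrix (Fin q) (Fin n) ℝ) (M₂ : Matrix (Fin q) (Fin m) ℝ)
    (hrow : (Matrix.fromCols M₁ M₂).rank = q)
    (hcol : M₁.rank = n) :
    (∃ V : Matrix (Fin m) (Fin (q - n)) ℝ, Function.Injective V.mulVec ∧
      ∃ T : Matrix (Fin n ⊕ Fin (q - n)) (Fin q) ℝ,
        Matrix.fromCols M₁ (M₂ * V) * T = 1 ∧ T * Matrix.fromCols M₁ (M₂ * V) = 1) ∧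
    (∀ (n' m' p' : ℕ) (A : Matrix (Fin n') (Fin n') ℝ) (B : Matrix (Fin n') (Fin m') ℝ)
        (C : Matrix (Fin p') (Fin n') ℝ),
      (Matrix.fromBlocks (A - 1) B C (0 : Matrix (Fin p') (Fin m') ℝ)).rank = n' + p' →
      (Matrix.fromRows (A - 1) C).rank = n' →
      ∃ V : Matrix (Fin m') (Fin p') ℝ, Function.Injective V.mulVec ∧
        IsUnit (Matrix.fromBlocks (A - 1) (B * V) C (0 : Matrix (Fin p') (Fin p') ℝ))) := by
  constructor
  · have hnq : n ≤ q := by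
      have := Matrix.rank_le_card_height M₁
      rw [hcol] at this
      simpa using this
    exact aux_completion (q - n) M₁ M₂ (by simp [Nat.add_sub_cancel' hnq])
      (by simpa using hrow) (by simpa using hcol)
  · intro n' m' p' A B C hrow' hcol'
    obtain ⟨V, hV, T, hT1, hT2⟩ := aux_completion p'
      (Matrix.fromRows (A - 1) C) (Matrix.fromRows B (0 : Matrix (Fin p') (Fin m') ℝ))
      (by simp)
      (by rw [Matrix.fromCols_fromRows_eq_fromBlocks]; simpa using hrow')
      (by simpa using hcol')
    have hkey : Matrix.fromCols (Matrix.fromRows (A - 1) C)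
        (Matrix.fromRows B (0 : Matrix (Fin p') (Fin m') ℝ) * V)
        = Matrix.fromBlocks (A - 1) (B * V) C (0 : Matrix (Fin p') (Fin p') ℝ) := by
      rw [Matrix.fromRows_mul, Matrix.zero_mul, Matrix.fromCols_fromRows_eq_fromBlocks]
    rw [hkey] at hT1 hT2
    exact ⟨V, hV, ⟨⟨_, T, hT1, hT2⟩, rfl⟩⟩

end
end

section
/- Let A ∈ ℝ^{n×n}, B ∈ ℝ^{n×m}, C ∈ ℝ^{p×n}, and let V ∈ ℝ^{m×p} be such that the square matrix T = [[A−I, BV],[C, 0]] ∈ ℝ^{(n+p)×(n+p)} is invertible. Let (Π, Γ') ∈ ℝ^{n×p} × ℝ^{p×p} be the unique solution of T [Π; Γ'] = [0; I_p], and set Γ = V Γ' ∈ ℝ^{m×p}. Then (A−I)Π + BΓ = 0, CΠ = I_p, and rank [[A−I, BΓ],[C, 0]] = n + rank Γ. -/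
open Matrix Filter Topology

noncomputable section

/-- If two matrices (with the same, finite, column index type) have equal kernels,
they have equal rank. -/
lemma rank_eq_of_ker_eq {k n₁ n₂ : ℕ} (M : Matrix (Fin n₁) (Fin k) ℝ)
    (N : Matrix (Fin n₂) (Fin k) ℝ)
    (h : LinearMap.ker M.mulVecLin = LinearMap.ker N.mulVecLin) : M.rank = N.rank := by
  have h1 := LinearMap.finrank_range_add_finrank_ker M.mulVecLin
  have h2 := LinearMap.finrank_range_add_finrank_ker N.mulVecLin
  rw [h] at h1
  simp only [Module.finrank_fintype_fun_eq_card, Fintype.card_fin] at h1 h2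
  rw [Matrix.rank, Matrix.rank]
  omega

/-- If `T = [[A−I, BV],[C, 0]]` is invertible and `(Π, Γ')` is the (unique) solution of
`T [Π; Γ'] = [0; I]`, then with `Γ = VΓ'` the regulator equations `(A−I)Π + BΓ = 0`,
`CΠ = I` hold, together with the rank condition
`rank [[A−I, BΓ],[C, 0]] = n + rank Γ`. -/
theorem regulator_equations_from_invertible_T
    {n m p : ℕ}
    (A : Matrix (Fin n) (Fin n) ℝ) (B : Matrix (Fin n) (Fin m) ℝ)
    (C : Matrix (Fin p) (Fin n) ℝ) (V : Matrix (Fin m) (Fin p) ℝ)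
    (hT : IsUnit (Matrix.fromBlocks (A - 1) (B * V) C (0 : Matrix (Fin p) (Fin p) ℝ)))
    (Pim : Matrix (Fin n) (Fin p) ℝ) (Γ' : Matrix (Fin p) (Fin p) ℝ)
    (hsol : Matrix.fromBlocks (A - 1) (B * V) C (0 : Matrix (Fin p) (Fin p) ℝ) *
        Matrix.fromRows Pim Γ' =
      Matrix.fromRows (0 : Matrix (Fin n) (Fin p) ℝ) (1 : Matrix (Fin p) (Fin p) ℝ)) :
    (A - 1) * Pim + B * (V * Γ') = 0 ∧
    C * Pim = 1 ∧
    (Matrix.fromBlocks (A - 1) (B * (V * Γ')) C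
      (0 : Matrix (Fin p) (Fin p) ℝ)).rank = n + (V * Γ').rank := by
  set T := Matrix.fromBlocks (A - 1) (B * V) C (0 : Matrix (Fin p) (Fin p) ℝ) with hTdef
  -- unpack the solution equation
  rw [hTdef, Matrix.fromBlocks_mul_fromRows, Matrix.fromRows_ext_iff] at hsol
  obtain ⟨h1, h2⟩ := hsol
  rw [Matrix.zero_mul, add_zero] at h2
  have hreg : (A - 1) * Pim + B * (V * Γ') = 0 := by
    rw [← Matrix.mul_assoc]; exact h1
  refine ⟨hreg, h2, ?_⟩
  -- injectivity of mulVec by T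
  have hTinj : Function.Injective T.mulVec :=
    Matrix.mulVec_injective_iff_isUnit.2 hT
  -- kernels of VΓ' and Γ' agree
  have hker : LinearMap.ker (V * Γ').mulVecLin = LinearMap.ker Γ'.mulVecLin := by
    ext x
    simp only [LinearMap.mem_ker, Matrix.mulVecLin_apply]
    constructor
    · intro hx
      have hy : T.mulVec (Sum.elim 0 (Γ'.mulVec x)) = 0 := by
        rw [hTdef, Matrix.fromBlocks_mulVec]
        have : (B * V).mulVec (Γ'.mulVec x) = B.mulVec ((V * Γ').mulVec x) := by
          rw [← Matrix.mulVec_mulVec, ← Matrix.mulVec_mulVec, Matrix.mulVec_mulVec]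
        simp [this, hx]
      have := hTinj (hy.trans (Matrix.mulVec_zero T).symm)
      have := congrFun this
      funext i
      simpa using this (Sum.inr i)
    · intro hx
      rw [← Matrix.mulVec_mulVec, hx, Matrix.mulVec_zero]
  have hrank1 : (V * Γ').rank = Γ'.rank := by
    have h1 := LinearMap.finrank_range_add_finrank_ker (V * Γ').mulVecLin
    have h2 := LinearMap.finrank_range_add_finrank_ker Γ'.mulVecLin
    rw [hker] at h1
    simp only [Module.finrank_fintype_fun_eq_card, Fintype.card_fin] at h1 h2
    rw [Matrix.rank, Matrix.rank]
    omega
  -- the big matrix factors as T * D with D block diagonal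
  set D := Matrix.fromBlocks (1 : Matrix (Fin n) (Fin n) ℝ) 0 0 Γ' with hDdef
  have hfac : Matrix.fromBlocks (A - 1) (B * (V * Γ')) C
      (0 : Matrix (Fin p) (Fin p) ℝ) = T * D := by
    rw [hTdef, hDdef, Matrix.fromBlocks_multiply]
    simp [Matrix.mul_assoc]
  have hTdet : IsUnit T.det := (Matrix.isUnit_iff_isUnit_det T).1 hT
  rw [hfac, Matrix.rank_mul_eq_right_of_isUnit_det T D hTdet]
  -- rank of the block diagonal D is n + rank Γ'
  -- via kernel equivalence with ker Γ'
  have hkerD : ∀ v : (Fin n ⊕ Fin p) → ℝ,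
      D.mulVec v = 0 ↔ (v ∘ Sum.inl = 0 ∧ Γ'.mulVec (v ∘ Sum.inr) = 0) := by
    intro v
    rw [hDdef, Matrix.fromBlocks_mulVec]
    constructor
    · intro h
      have h' := congrFun h
      constructor
      · funext i; simpa using h' (Sum.inl i)
      · funext i; simpa using h' (Sum.inr i)
    · rintro ⟨ha, hb⟩
      funext i
      cases i with
      | inl i => simpa using congrFun ha i
      | inr i => simpa using congrFun hb i
  let e : LinearMap.ker D.mulVecLin ≃ₗ[ℝ] LinearMap.ker Γ'.mulVecLin :=
    { toFun := fun v => ⟨v.1 ∘ Sum.inr, by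
        have := ((hkerD v.1).1 v.2).2
        simpa [Matrix.mulVecLin_apply] using this⟩
      map_add' := fun a b => rfl
      map_smul' := fun c a => rfl
      invFun := fun y => ⟨Sum.elim 0 y.1, by
        have : Γ'.mulVec y.1 = 0 := LinearMap.mem_ker.mp y.2
        simp only [LinearMap.mem_ker, Matrix.mulVecLin_apply]
        rw [hkerD]
        exact ⟨rfl, by simpa using this⟩⟩
      left_inv := fun v => by
        ext i
        cases i with
        | inl i =>
          have := ((hkerD v.1).1 v.2).1
          simpa using (congrFun this i).symm
        | inr i => rfl
      right_inv := fun y => rfl }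
  have hkerfin : Module.finrank ℝ (LinearMap.ker D.mulVecLin)
      = Module.finrank ℝ (LinearMap.ker Γ'.mulVecLin) := e.finrank_eq
  have hD := LinearMap.finrank_range_add_finrank_ker D.mulVecLin
  have hG := LinearMap.finrank_range_add_finrank_ker Γ'.mulVecLin
  rw [hkerfin] at hD
  simp only [Module.finrank_fintype_fun_eq_card, Fintype.card_sum, Fintype.card_fin] at hD hG
  rw [show D.rank = Module.finrank ℝ (LinearMap.range D.mulVecLin) from rfl] at *
  rw [hrank1, show Γ'.rank = Module.finrank ℝ (LinearMap.range Γ'.mulVecLin) from rfl]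
  omega

end
end

section
/- Let A ∈ ℝ^{n×n}, B ∈ ℝ^{n×m}, C ∈ ℝ^{p×n}, R ∈ ℝ^{p×q}, and assume the matrix [A−I; C] ∈ ℝ^{(n+p)×n} has full column rank n. Suppose there exist Π₀ ∈ ℝ^{n×q} and Γ₀ ∈ ℝ^{m×q} with (A−I)Π₀ + BΓ₀ = 0 and CΠ₀ = R. Then there exist Π ∈ ℝ^{n×q} and Γ ∈ ℝ^{m×q} satisfying (A−I)Π + BΓ = 0, CΠ = R, and additionally the rank condition rank [[A−I, BΓ],[C, 0]] = n + rank Γ. -/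
open Matrix Filter Topology

noncomputable section

section RegulatorAux

private theorem mul_vecMulVec' {n m q : ℕ} (M : Matrix (Fin n) (Fin m) ℝ)
    (a : Fin m → ℝ) (v : Fin q → ℝ) :
    M * Matrix.vecMulVec a v = Matrix.vecMulVec (M *ᵥ a) v := by
  ext i j
  simp [Matrix.mul_apply, Matrix.vecMulVec_apply, Matrix.mulVec, dotProduct,
    Finset.sum_mul, mul_assoc]

private theorem vecMulVec_mulVec' {m q : ℕ} (a : Fin m → ℝ) (v w : Fin q → ℝ) :
    Matrix.vecMulVec a v *ᵥ w = (v ⬝ᵥ w) • a := by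
  ext i
  simp [Matrix.vecMulVec_apply, Matrix.mulVec, dotProduct, Finset.mul_sum, mul_assoc]
  rw [Finset.sum_mul]
  exact Finset.sum_congr rfl fun k _ => by ring

private theorem vecMulVec_zero_left' {m q : ℕ} (v : Fin q → ℝ) :
    Matrix.vecMulVec (0 : Fin m → ℝ) v = 0 := by
  ext i j; simp [Matrix.vecMulVec_apply]

/-- Separating functional: if `u ∉ K` there is a row vector `v` with `v ⬝ᵥ u = 1`
vanishing on `K`. -/
private theorem exists_dual_vec' {q : ℕ} (K : Submodule ℝ (Fin q → ℝ)) (u : Fin q → ℝ)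
    (hu : u ∉ K) :
    ∃ v : Fin q → ℝ, v ⬝ᵥ u = 1 ∧ ∀ w ∈ K, v ⬝ᵥ w = 0 := by
  have hmk : K.mkQ u ≠ 0 := by
    simpa [Submodule.Quotient.mk_eq_zero] using hu
  obtain ⟨ψ, hψ⟩ : ∃ ψ : Module.Dual ℝ ((Fin q → ℝ) ⧸ K), ψ (K.mkQ u) ≠ 0 := by
    by_contra h
    push_neg at h
    exact hmk ((Module.forall_dual_apply_eq_zero_iff ℝ _).mp h)
  set φ : Module.Dual ℝ (Fin q → ℝ) := (ψ (K.mkQ u))⁻¹ • (ψ.comp K.mkQ) with hφ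
  have hφu : φ u = 1 := by
    simp only [hφ, LinearMap.smul_apply, LinearMap.comp_apply, smul_eq_mul]
    exact inv_mul_cancel₀ hψ
  have hφK : ∀ w ∈ K, φ w = 0 := by
    intro w hw
    have : K.mkQ w = 0 := by simpa [Submodule.Quotient.mk_eq_zero] using hw
    simp [hφ, this]
  have key : ∀ w : Fin q → ℝ, (fun j => φ (Pi.single j 1)) ⬝ᵥ w = φ w := by
    intro w
    conv_rhs => rw [← Finset.univ_sum_single w]
    rw [map_sum]
    refine Finset.sum_congr rfl fun j _ => ?_
    have h1 : Pi.single j (w j) = w j • (Pi.single j 1 : Fin q → ℝ) := by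
      ext k; by_cases h : k = j <;> simp [Pi.single_apply, h]
    rw [h1, _root_.map_smul, smul_eq_mul, mul_comm]
  exact ⟨_, by rw [key]; exact hφu, fun w hw => by rw [key]; exact hφK w hw⟩

/-- When the "regularity" condition holds, the block matrix has rank `n + rank Γ`. -/
private theorem rank_blocks_eq' {n m p q : ℕ}
    (A : Matrix (Fin n) (Fin n) ℝ) (B : Matrix (Fin n) (Fin m) ℝ)
    (C : Matrix (Fin p) (Fin n) ℝ)
    (hinj : ∀ x : Fin n → ℝ, (A - 1) *ᵥ x = 0 → C *ᵥ x = 0 → x = 0)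
    (Γ : Matrix (Fin m) (Fin q) ℝ)
    (H : ∀ u : Fin q → ℝ, (∃ x, (A - 1) *ᵥ x = B *ᵥ (Γ *ᵥ u) ∧ C *ᵥ x = 0) → Γ *ᵥ u = 0) :
    (Matrix.fromBlocks (A - 1) (B * Γ) C (0 : Matrix (Fin p) (Fin q) ℝ)).rank = n + Γ.rank := by
  set M := Matrix.fromBlocks (A - 1) (B * Γ) C (0 : Matrix (Fin p) (Fin q) ℝ) with hM
  set g : (Fin q → ℝ) →ₗ[ℝ] (Fin n ⊕ Fin q → ℝ) :=
    { toFun := fun u => Sum.elim 0 u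
      map_add' := by intro a b; ext (i | j) <;> simp
      map_smul' := by intro c a; ext (i | j) <;> simp } with hg
  have hginj : Function.Injective g := by
    intro a b hab
    have := congrArg (fun f => f ∘ Sum.inr) hab
    simpa [hg] using this
  have hker : LinearMap.ker M.mulVecLin =
      Submodule.map g (LinearMap.ker Γ.mulVecLin) := by
    apply le_antisymm
    · intro z hz
      have hz' : M *ᵥ z = 0 := hz
      rw [hM, Matrix.fromBlocks_mulVec] at hz'
      have h1 : (A - 1) *ᵥ (z ∘ Sum.inl) + B *ᵥ (Γ *ᵥ (z ∘ Sum.inr)) = 0 := by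
        funext i
        simpa [Matrix.mulVec_mulVec] using congrFun hz' (Sum.inl i)
      have h2 : C *ᵥ (z ∘ Sum.inl) = 0 := by
        funext i
        simpa using congrFun hz' (Sum.inr i)
      have hu : Γ *ᵥ (z ∘ Sum.inr) = 0 := by
        refine H _ ⟨-(z ∘ Sum.inl), ?_, ?_⟩
        · rw [Matrix.mulVec_neg]
          rw [add_eq_zero_iff_neg_eq] at h1
          exact h1
        · rw [Matrix.mulVec_neg, h2, neg_zero]
      have hx : z ∘ Sum.inl = 0 := by
        refine hinj _ ?_ h2
        rw [hu, Matrix.mulVec_zero, add_zero] at h1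
        exact h1
      refine ⟨z ∘ Sum.inr, hu, ?_⟩
      funext i
      rcases i with i | j
      · simpa [hg] using (congrFun hx i).symm
      · rfl
    · rintro z ⟨u, hu, rfl⟩
      have hu' : Γ *ᵥ u = 0 := hu
      show M *ᵥ (Sum.elim 0 u) = 0
      rw [hM, Matrix.fromBlocks_mulVec]
      funext i
      rcases i with i | j <;>
        simp [Sum.elim_comp_inl, Sum.elim_comp_inr, ← Matrix.mulVec_mulVec, hu']
  have r1 : M.rank + Module.finrank ℝ (LinearMap.ker M.mulVecLin) = n + q := by
    have := LinearMap.finrank_range_add_finrank_ker M.mulVecLin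
    simpa [Matrix.rank] using this
  have r2 : Γ.rank + Module.finrank ℝ (LinearMap.ker Γ.mulVecLin) = q := by
    have := LinearMap.finrank_range_add_finrank_ker Γ.mulVecLin
    simpa [Matrix.rank] using this
  have r3 : Module.finrank ℝ (LinearMap.ker M.mulVecLin)
      = Module.finrank ℝ (LinearMap.ker Γ.mulVecLin) := by
    rw [hker]
    exact ((Submodule.equivMapOfInjective g hginj _).finrank_eq).symm
  omega

/-- Descent step: if the regularity condition fails at `u`, one can modify the
solution, strictly decreasing `rank Γ`. -/
private theorem descent' {n m p q : ℕ}
    (A : Matrix (Fin n) (Fin n) ℝ) (B : Matrix (Fin n) (Fin m) ℝ)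
    (C : Matrix (Fin p) (Fin n) ℝ) (R : Matrix (Fin p) (Fin q) ℝ)
    (Pim : Matrix (Fin n) (Fin q) ℝ) (Γ : Matrix (Fin m) (Fin q) ℝ)
    (h1 : (A - 1) * Pim + B * Γ = 0) (h2 : C * Pim = R)
    (u : Fin q → ℝ) (hu : Γ *ᵥ u ≠ 0)
    (x : Fin n → ℝ) (hx1 : (A - 1) *ᵥ x = B *ᵥ (Γ *ᵥ u)) (hx2 : C *ᵥ x = 0) :
    ∃ (Pim' : Matrix (Fin n) (Fin q) ℝ) (Γ' : Matrix (Fin m) (Fin q) ℝ),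
      (A - 1) * Pim' + B * Γ' = 0 ∧ C * Pim' = R ∧ Γ'.rank < Γ.rank := by
  set K := LinearMap.ker Γ.mulVecLin with hK
  have huK : u ∉ K := fun h => hu h
  obtain ⟨v, hv1, hv2⟩ := exists_dual_vec' K u huK
  refine ⟨Pim + Matrix.vecMulVec x v, Γ - Matrix.vecMulVec (Γ *ᵥ u) v, ?_, ?_, ?_⟩
  · have e1 : (A - 1) * Matrix.vecMulVec x v = B * Matrix.vecMulVec (Γ *ᵥ u) v := by
      rw [mul_vecMulVec', mul_vecMulVec', hx1]
    rw [Matrix.mul_add, Matrix.mul_sub, e1]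
    have hab : ((A - 1) * Pim + B * Matrix.vecMulVec (Γ *ᵥ u) v)
        + (B * Γ - B * Matrix.vecMulVec (Γ *ᵥ u) v) = (A - 1) * Pim + B * Γ := by
      abel
    rw [hab]
    exact h1
  · rw [Matrix.mul_add, h2, mul_vecMulVec', hx2, vecMulVec_zero_left', add_zero]
  · set Γ' := Γ - Matrix.vecMulVec (Γ *ᵥ u) v with hΓ'
    have hmv : ∀ w, Γ' *ᵥ w = Γ *ᵥ w - (v ⬝ᵥ w) • (Γ *ᵥ u) := by
      intro w
      rw [hΓ', Matrix.sub_mulVec, vecMulVec_mulVec']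
    have hlt : K < LinearMap.ker Γ'.mulVecLin := by
      rw [SetLike.lt_iff_le_and_exists]
      refine ⟨fun w hw => ?_, u, ?_, huK⟩
      · have hw' : Γ *ᵥ w = 0 := hw
        have : v ⬝ᵥ w = 0 := hv2 w hw
        show Γ' *ᵥ w = 0
        rw [hmv, hw', this, zero_smul, sub_zero]
      · show Γ' *ᵥ u = 0
        rw [hmv, hv1, one_smul, sub_self]
    have hfr : Module.finrank ℝ K < Module.finrank ℝ (LinearMap.ker Γ'.mulVecLin) :=
      Submodule.finrank_lt_finrank_of_lt hlt
    have r2 : Γ.rank + Module.finrank ℝ K = q := by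
      have := LinearMap.finrank_range_add_finrank_ker Γ.mulVecLin
      simpa [Matrix.rank, hK] using this
    have r2' : Γ'.rank + Module.finrank ℝ (LinearMap.ker Γ'.mulVecLin) = q := by
      have := LinearMap.finrank_range_add_finrank_ker Γ'.mulVecLin
      simpa [Matrix.rank] using this
    omega

private theorem regulator_aux {n m p q : ℕ}
    (A : Matrix (Fin n) (Fin n) ℝ) (B : Matrix (Fin n) (Fin m) ℝ)
    (C : Matrix (Fin p) (Fin n) ℝ) (R : Matrix (Fin p) (Fin q) ℝ)
    (hinj : ∀ x : Fin n → ℝ, (A - 1) *ᵥ x = 0 → C *ᵥ x = 0 → x = 0) :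
    ∀ k (Pim : Matrix (Fin n) (Fin q) ℝ) (Γ : Matrix (Fin m) (Fin q) ℝ), Γ.rank ≤ k →
      (A - 1) * Pim + B * Γ = 0 → C * Pim = R →
      ∃ (Pim' : Matrix (Fin n) (Fin q) ℝ) (Γ' : Matrix (Fin m) (Fin q) ℝ),
        (A - 1) * Pim' + B * Γ' = 0 ∧
        C * Pim' = R ∧
        (Matrix.fromBlocks (A - 1) (B * Γ') C
          (0 : Matrix (Fin p) (Fin q) ℝ)).rank = n + Γ'.rank := by
  intro k
  induction k using Nat.strong_induction_on with
  | _ k ih =>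
    intro Pim Γ hk e1 e2
    by_cases H : ∀ u : Fin q → ℝ,
        (∃ x, (A - 1) *ᵥ x = B *ᵥ (Γ *ᵥ u) ∧ C *ᵥ x = 0) → Γ *ᵥ u = 0
    · exact ⟨Pim, Γ, e1, e2, rank_blocks_eq' A B C hinj Γ H⟩
    · push_neg at H
      obtain ⟨u, ⟨x, hx1, hx2⟩, hu⟩ := H
      obtain ⟨Pim', Γ', e1', e2', hlt⟩ := descent' A B C R Pim Γ e1 e2 u hu x hx1 hx2
      exact ih Γ'.rank (lt_of_lt_of_le hlt hk) Pim' Γ' le_rfl e1' e2'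

end RegulatorAux

/-- If `[A−I; C]` has full column rank and the regulator equations
`(A−I)Π₀ + BΓ₀ = 0`, `CΠ₀ = R` admit some solution, then they admit a solution
`(Π, Γ)` that additionally satisfies the rank condition
`rank [[A−I, BΓ],[C, 0]] = n + rank Γ`. -/
theorem regulator_solution_with_rank_condition
    {n m p q : ℕ}
    (A : Matrix (Fin n) (Fin n) ℝ) (B : Matrix (Fin n) (Fin m) ℝ)
    (C : Matrix (Fin p) (Fin n) ℝ) (R : Matrix (Fin p) (Fin q) ℝ)
    (hcol : (Matrix.fromRows (A - 1) C).rank = n)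
    (Pim0 : Matrix (Fin n) (Fin q) ℝ) (Γ0 : Matrix (Fin m) (Fin q) ℝ)
    (hreg10 : (A - 1) * Pim0 + B * Γ0 = 0)
    (hreg20 : C * Pim0 = R) :
    ∃ (Pim : Matrix (Fin n) (Fin q) ℝ) (Γ : Matrix (Fin m) (Fin q) ℝ),
      (A - 1) * Pim + B * Γ = 0 ∧
      C * Pim = R ∧
      (Matrix.fromBlocks (A - 1) (B * Γ) C
        (0 : Matrix (Fin p) (Fin q) ℝ)).rank = n + Γ.rank := by
  have hinj : ∀ x : Fin n → ℝ, (A - 1) *ᵥ x = 0 → C *ᵥ x = 0 → x = 0 := by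
    have hkt : LinearMap.ker (Matrix.fromRows (A - 1) C).mulVecLin = ⊥ := by
      have hr := LinearMap.finrank_range_add_finrank_ker
        (Matrix.fromRows (A - 1) C).mulVecLin
      have hr' : (Matrix.fromRows (A - 1) C).rank
          + Module.finrank ℝ (LinearMap.ker (Matrix.fromRows (A - 1) C).mulVecLin) = n := by
        simpa [Matrix.rank] using hr
      rw [hcol] at hr'
      have : Module.finrank ℝ
          (LinearMap.ker (Matrix.fromRows (A - 1) C).mulVecLin) = 0 := by omega
      exact Submodule.finrank_eq_zero.mp this
    intro x hx1 hx2
    have hmem : x ∈ LinearMap.ker (Matrix.fromRows (A - 1) C).mulVecLin := by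
      show Matrix.fromRows (A - 1) C *ᵥ x = 0
      rw [Matrix.fromRows_mulVec, hx1, hx2]
      funext i
      rcases i with i | j <;> rfl
    rw [hkt] at hmem
    simpa using hmem
  exact regulator_aux A B C R hinj Γ0.rank Pim0 Γ0 le_rfl hreg10 hreg20

end
end

section
/- Let A ∈ ℝ^{n×n}, B ∈ ℝ^{n×m} with (A,B) stabilizable, let Γ₁ ∈ ℝ^{m×v} and Γ₂ ∈ ℝ^{m×(m−v)} be such that the square matrix [Γ₁ Γ₂] ∈ ℝ^{m×m} is invertible, and define Ā = [[A, BΓ₁],[0, I_v]] ∈ ℝ^{(n+v)×(n+v)} and B̄ = [[BΓ₂, 0],[0, I_v]] ∈ ℝ^{(n+v)×m}. Then the pair (Ā, B̄) is stabilizable, i.e. rank [zI − Ā, B̄] = n + v for every z ∈ ℂ with |z| ≥ 1. -/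
open Matrix Filter Topology

noncomputable section

lemma fromColumns_map' {m n₁ n₂ : Type*} {R S : Type*} (A : Matrix m n₁ R) (B : Matrix m n₂ R)
    (f : R → S) : (Matrix.fromCols A B).map f = Matrix.fromCols (A.map f) (B.map f) := by
  ext i j
  cases j <;> simp [Matrix.fromCols]

lemma map_ofReal_mul {a b c : Type*} [Fintype b] (M : Matrix a b ℝ) (N : Matrix b c ℝ) :
    (M * N).map Complex.ofReal = M.map Complex.ofReal * N.map Complex.ofReal :=
  Matrix.map_mul (f := Complex.ofRealHom)

lemma map_ofReal_one {a : Type*} [Fintype a] [DecidableEq a] :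
    (1 : Matrix a a ℝ).map Complex.ofReal = 1 :=
  Matrix.map_one _ Complex.ofReal_zero Complex.ofReal_one

lemma map_ofReal_zero {a b : Type*} :
    (0 : Matrix a b ℝ).map Complex.ofReal = 0 :=
  Matrix.map_zero _ Complex.ofReal_zero

/-- If `(A,B)` is stabilizable and `[Γ₁ Γ₂]` is invertible, then the compensated pair
`(Ā, B̄)` with `Ā = [[A, BΓ₁],[0, I]]` and `B̄ = [[BΓ₂, 0],[0, I]]` is stabilizable
(discrete-time Hautus test). -/
theorem compensated_pair_stabilizable
    {n m v : ℕ}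
    (A : Matrix (Fin n) (Fin n) ℝ) (B : Matrix (Fin n) (Fin m) ℝ)
    (hstab : ∀ z : ℂ, 1 ≤ ‖z‖ →
      (Matrix.fromCols (z • (1 : Matrix (Fin n) (Fin n) ℂ) - A.map Complex.ofReal)
        (B.map Complex.ofReal)).rank = n)
    (Γ₁ : Matrix (Fin m) (Fin v) ℝ) (Γ₂ : Matrix (Fin m) (Fin (m - v)) ℝ)
    (S : Matrix (Fin v ⊕ Fin (m - v)) (Fin m) ℝ)
    (hS1 : Matrix.fromCols Γ₁ Γ₂ * S = 1)
    (hS2 : S * Matrix.fromCols Γ₁ Γ₂ = 1) :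
    ∀ z : ℂ, 1 ≤ ‖z‖ →
      (Matrix.fromCols
        (z • (1 : Matrix (Fin n ⊕ Fin v) (Fin n ⊕ Fin v) ℂ) -
          (Matrix.fromBlocks A (B * Γ₁) 0 (1 : Matrix (Fin v) (Fin v) ℝ)).map Complex.ofReal)
        ((Matrix.fromBlocks (B * Γ₂) 0 0 (1 : Matrix (Fin v) (Fin v) ℝ)).map
          Complex.ofReal)).rank = n + v := by
  intro z hz
  classical
  set Ac : Matrix (Fin n) (Fin n) ℂ := A.map Complex.ofReal with hAc
  set Bc : Matrix (Fin n) (Fin m) ℂ := B.map Complex.ofReal with hBc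
  set Γ₁c : Matrix (Fin m) (Fin v) ℂ := Γ₁.map Complex.ofReal with hΓ₁c
  set Γ₂c : Matrix (Fin m) (Fin (m - v)) ℂ := Γ₂.map Complex.ofReal with hΓ₂c
  set Sc : Matrix (Fin v ⊕ Fin (m - v)) (Fin m) ℂ := S.map Complex.ofReal with hSc
  -- complexified inverse identity
  have hS1c : Matrix.fromCols Γ₁c Γ₂c * Sc = 1 := by
    have := congrArg (fun M => M.map Complex.ofReal) hS1
    simpa [map_ofReal_mul, fromColumns_map', map_ofReal_one, hΓ₁c, hΓ₂c, hSc] using this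
  -- surjectivity of Hautus matrix for (A,B)
  have hH := hstab z hz
  have hsurjH : Function.Surjective
      (Matrix.fromCols (z • (1 : Matrix (Fin n) (Fin n) ℂ) - Ac) Bc).mulVecLin := by
    rw [← LinearMap.range_eq_top]
    apply Submodule.eq_top_of_finrank_eq
    rw [Module.finrank_pi, Fintype.card_fin]
    exact hH
  -- suffices: surjectivity of the big Hautus matrix
  suffices hsurj : Function.Surjective
      (Matrix.fromCols
        (z • (1 : Matrix (Fin n ⊕ Fin v) (Fin n ⊕ Fin v) ℂ) -
          (Matrix.fromBlocks A (B * Γ₁) 0 (1 : Matrix (Fin v) (Fin v) ℝ)).map Complex.ofReal)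
        ((Matrix.fromBlocks (B * Γ₂) 0 0 (1 : Matrix (Fin v) (Fin v) ℝ)).map
          Complex.ofReal)).mulVecLin by
    rw [Matrix.rank, LinearMap.range_eq_top.mpr hsurj, finrank_top, Module.finrank_pi,
      Fintype.card_sum, Fintype.card_fin, Fintype.card_fin]
  -- block decomposition of the two pieces
  have hL : z • (1 : Matrix (Fin n ⊕ Fin v) (Fin n ⊕ Fin v) ℂ) -
      (Matrix.fromBlocks A (B * Γ₁) 0 (1 : Matrix (Fin v) (Fin v) ℝ)).map Complex.ofReal
      = Matrix.fromBlocks (z • (1 : Matrix (Fin n) (Fin n) ℂ) - Ac) (-(Bc * Γ₁c)) 0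
          (z • (1 : Matrix (Fin v) (Fin v) ℂ) - 1) := by
    have hmap : (Matrix.fromBlocks A (B * Γ₁) 0 (1 : Matrix (Fin v) (Fin v) ℝ)).map
        Complex.ofReal = Matrix.fromBlocks Ac (Bc * Γ₁c) 0 1 := by
      rw [Matrix.fromBlocks_map, map_ofReal_mul, map_ofReal_one, map_ofReal_zero, hAc, hBc, hΓ₁c]
    rw [hmap, ← Matrix.fromBlocks_one, Matrix.fromBlocks_smul]
    ext i j
    cases i <;> cases j <;> simp [Matrix.fromBlocks]
  have hR : (Matrix.fromBlocks (B * Γ₂) 0 0 (1 : Matrix (Fin v) (Fin v) ℝ)).map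
      Complex.ofReal = Matrix.fromBlocks (Bc * Γ₂c) 0 0 1 := by
    rw [Matrix.fromBlocks_map, map_ofReal_mul, map_ofReal_one, map_ofReal_zero, map_ofReal_zero, hBc, hΓ₂c]
  rw [hL, hR]
  -- now prove surjectivity
  intro y
  obtain ⟨x, hx⟩ := hsurjH (y ∘ Sum.inl)
  rw [Matrix.mulVecLin_apply] at hx
  have hx' : (z • (1 : Matrix (Fin n) (Fin n) ℂ) - Ac) *ᵥ (x ∘ Sum.inl)
      + Bc *ᵥ (x ∘ Sum.inr) = y ∘ Sum.inl := by
    rw [← Matrix.fromCols_mulVec_sumElim, Sum.elim_comp_inl_inr]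
    exact hx
  set s : Fin v ⊕ Fin (m - v) → ℂ := Sc *ᵥ (x ∘ Sum.inr) with hs
  have hkey : (Bc * Γ₁c) *ᵥ (s ∘ Sum.inl) + (Bc * Γ₂c) *ᵥ (s ∘ Sum.inr)
      = Bc *ᵥ (x ∘ Sum.inr) := by
    have haux : Matrix.fromCols Γ₁c Γ₂c *ᵥ (Sc *ᵥ (x ∘ Sum.inr)) = x ∘ Sum.inr := by
      rw [Matrix.mulVec_mulVec, hS1c, Matrix.one_mulVec]
    rw [← Matrix.mulVec_mulVec, ← Matrix.mulVec_mulVec, ← Matrix.mulVec_add,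
      ← Matrix.fromCols_mulVec_sumElim, Sum.elim_comp_inl_inr, hs, haux]
  refine ⟨Sum.elim (Sum.elim (x ∘ Sum.inl) (-(s ∘ Sum.inl)))
      (Sum.elim (s ∘ Sum.inr) (y ∘ Sum.inr + (z - 1) • (s ∘ Sum.inl))), ?_⟩
  rw [Matrix.mulVecLin_apply, Matrix.fromCols_mulVec_sumElim,
    Matrix.fromBlocks_mulVec, Matrix.fromBlocks_mulVec]
  funext i
  cases i with
  | inl i =>
    have h1 := congrFun hx' i
    have h2 := congrFun hkey i
    simp only [Pi.add_apply, Function.comp_apply] at h1 h2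
    simp only [Sum.elim_inl, Sum.elim_comp_inl, Sum.elim_comp_inr, Matrix.neg_mulVec,
      Matrix.mulVec_neg, Matrix.zero_mulVec, neg_neg, Pi.add_apply, Pi.zero_apply,
      Pi.neg_apply, add_zero, Function.comp_apply]
    linear_combination h1 + h2
  | inr i =>
    simp only [Sum.elim_inr, Sum.elim_comp_inl, Sum.elim_comp_inr, Matrix.zero_mulVec,
      Matrix.sub_mulVec, Matrix.smul_mulVec, Matrix.one_mulVec, Matrix.mulVec_neg,
      Pi.add_apply, Pi.zero_apply, Pi.sub_apply, Pi.neg_apply, Pi.smul_apply, smul_eq_mul,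
      zero_add, Function.comp_apply]
    ring


end
end

section
/- Let A ∈ ℝ^{n×n}, B ∈ ℝ^{n×m}, C ∈ ℝ^{p×n} with (A,C) detectable, let Γ ∈ ℝ^{m×q} with rank Γ = v, let Γ₁ ∈ ℝ^{m×v} be injective with im Γ₁ = im Γ, and assume the rank condition rank [[A−I, BΓ],[C, 0]] = n + rank Γ holds. Define Ā = [[A, BΓ₁],[0, I_v]] ∈ ℝ^{(n+v)×(n+v)} and C̄ = [C, 0] ∈ ℝ^{p×(n+v)}. Then the pair (Ā, C̄) is detectable, i.e. rank [zI − Ā; C̄] = n + v for every z ∈ ℂ with |z| ≥ 1. -/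
open Matrix Filter Topology

noncomputable section



-- rank = card cols iff mulVec injective kernel trivial
lemma rank_eq_card_iff_ker {α β : Type*} [Fintype α] [Fintype β] {K : Type*} [Field K]
    (M : Matrix α β K) :
    M.rank = Fintype.card β ↔ LinearMap.ker M.mulVecLin = ⊥ := by
  have hrn : M.rank + Module.finrank K (LinearMap.ker M.mulVecLin) = Fintype.card β := by
    rw [Matrix.rank, LinearMap.finrank_range_add_finrank_ker M.mulVecLin,
      Module.finrank_pi]
  constructor
  · intro h
    rw [← Submodule.finrank_eq_zero (R := K)]
    omega
  · intro h
    rw [h, finrank_bot] at hrn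
    omega

-- complexified mulVec of a real matrix kills u iff it kills re and im parts
lemma map_ofReal_mulVec_eq_zero {α β : Type*} [Fintype β] (R : Matrix α β ℝ)
    (hR : ∀ x : β → ℝ, R.mulVec x = 0 → x = 0)
    (u : β → ℂ) (hu : (R.map Complex.ofReal).mulVec u = 0) : u = 0 := by
  have hre : R.mulVec (fun j => (u j).re) = 0 := by
    ext i
    have := congrFun hu i
    simp only [Matrix.mulVec, dotProduct, Matrix.map_apply, Pi.zero_apply] at this ⊢
    have h2 := congrArg Complex.re this
    simpa [Complex.re_ofReal_mul] using h2
  have him : R.mulVec (fun j => (u j).im) = 0 := by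
    ext i
    have := congrFun hu i
    simp only [Matrix.mulVec, dotProduct, Matrix.map_apply, Pi.zero_apply] at this ⊢
    have h2 := congrArg Complex.im this
    simpa [Complex.im_ofReal_mul] using h2
  have h1 := hR _ hre
  have h2 := hR _ him
  ext j
  exact Complex.ext (congrFun h1 j) (congrFun h2 j)

/-- embedding w ↦ Sum.elim 0 w as a linear map -/
def inrL (K : Type*) [Field K] (α β : Type*) : (β → K) →ₗ[K] (α ⊕ β → K) where
  toFun w := Sum.elim 0 w
  map_add' x y := by ext (i | j) <;> simp
  map_smul' c x := by ext (i | j) <;> simp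

lemma blockKer {n' m' p' q' : ℕ} (A : Matrix (Fin n') (Fin n') ℝ)
    (B : Matrix (Fin n') (Fin m') ℝ) (C : Matrix (Fin p') (Fin n') ℝ)
    (Γ : Matrix (Fin m') (Fin q') ℝ)
    (hrank : (Matrix.fromBlocks (A - 1) (B * Γ) C
      (0 : Matrix (Fin p') (Fin q') ℝ)).rank = n' + Γ.rank)
    (x : Fin n' → ℝ) (w : Fin q' → ℝ)
    (hxw : (Matrix.fromBlocks (A - 1) (B * Γ) C
      (0 : Matrix (Fin p') (Fin q') ℝ)).mulVec (Sum.elim x w) = 0) :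
    x = 0 ∧ Γ.mulVec w = 0 := by
  set N := Matrix.fromBlocks (A - 1) (B * Γ) C (0 : Matrix (Fin p') (Fin q') ℝ) with hN
  set L := inrL ℝ (Fin n') (Fin q')
  have hLinj : Function.Injective L := by
    intro a b hab
    ext j
    exact congrFun hab (Sum.inr j)
  set S := Submodule.map L (LinearMap.ker Γ.mulVecLin) with hS
  have hSK : S ≤ LinearMap.ker N.mulVecLin := by
    rintro _ ⟨w', hw', rfl⟩
    have hw2 : Γ.mulVec w' = 0 := hw'
    simp only [LinearMap.mem_ker, Matrix.mulVecLin_apply]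
    show N.mulVec (Sum.elim 0 w') = 0
    rw [hN]
    ext (i | j) <;>
      simp [Matrix.fromBlocks_mulVec, ← Matrix.mulVec_mulVec, hw2]
  have hfinS : Module.finrank ℝ S = Module.finrank ℝ (LinearMap.ker Γ.mulVecLin) :=
    (Submodule.equivMapOfInjective L hLinj _).finrank_eq.symm
  have hrnΓ : Γ.rank + Module.finrank ℝ (LinearMap.ker Γ.mulVecLin) = q' := by
    rw [Matrix.rank, LinearMap.finrank_range_add_finrank_ker Γ.mulVecLin,
      Module.finrank_pi, Fintype.card_fin]
  have hrnN : N.rank + Module.finrank ℝ (LinearMap.ker N.mulVecLin) = n' + q' := by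
    rw [Matrix.rank, LinearMap.finrank_range_add_finrank_ker N.mulVecLin,
      Module.finrank_pi]
    simp
  have hΓle : Γ.rank ≤ q' := by
    simpa using Γ.rank_le_card_width
  have hfin : Module.finrank ℝ (LinearMap.ker N.mulVecLin) ≤ Module.finrank ℝ S := by
    rw [hfinS]; omega
  have hKS : S = LinearMap.ker N.mulVecLin :=
    Submodule.eq_of_le_of_finrank_le hSK hfin
  have hmem : Sum.elim x w ∈ S := by
    rw [hKS]
    simpa [LinearMap.mem_ker] using hxw
  obtain ⟨w', hw', heq⟩ := hmem
  have hx : x = 0 := by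
    ext i
    exact (congrFun heq (Sum.inl i)).symm
  have hw : w = w' := by
    ext j
    exact (congrFun heq (Sum.inr j)).symm
  refine ⟨hx, ?_⟩
  rw [hw]
  simpa [LinearMap.mem_ker] using hw'

lemma blockKerGamma1 {n' m' p' q' v' : ℕ} (A : Matrix (Fin n') (Fin n') ℝ)
    (B : Matrix (Fin n') (Fin m') ℝ) (C : Matrix (Fin p') (Fin n') ℝ)
    (Γ : Matrix (Fin m') (Fin q') ℝ) (Γ₁ : Matrix (Fin m') (Fin v') ℝ)
    (hΓ₁inj : Function.Injective Γ₁.mulVec)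
    (hΓ₁im : LinearMap.range Γ₁.mulVecLin = LinearMap.range Γ.mulVecLin)
    (hrank : (Matrix.fromBlocks (A - 1) (B * Γ) C
      (0 : Matrix (Fin p') (Fin q') ℝ)).rank = n' + Γ.rank)
    (xw : Fin n' ⊕ Fin v' → ℝ)
    (hxw : (Matrix.fromBlocks (A - 1) (B * Γ₁) C
      (0 : Matrix (Fin p') (Fin v') ℝ)).mulVec xw = 0) :
    xw = 0 := by
  set x := xw ∘ Sum.inl with hx
  set w₀ := xw ∘ Sum.inr with hw₀
  have hxww : xw = Sum.elim x w₀ := by ext (i | j) <;> rfl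
  rw [hxww, Matrix.fromBlocks_mulVec] at hxw
  have e1 : (A - 1).mulVec x + B.mulVec (Γ₁.mulVec w₀) = 0 := by
    have := congrFun hxw
    ext i
    have h := this (Sum.inl i)
    simpa [← Matrix.mulVec_mulVec] using h
  have e2 : C.mulVec x = 0 := by
    ext i
    have h := congrFun hxw (Sum.inr i)
    simpa using h
  obtain ⟨w, hw⟩ : ∃ w, Γ.mulVec w = Γ₁.mulVec w₀ := by
    have : Γ₁.mulVec w₀ ∈ LinearMap.range Γ.mulVecLin := by
      rw [← hΓ₁im]; exact ⟨w₀, rfl⟩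
    obtain ⟨w, hw⟩ := this
    exact ⟨w, hw⟩
  have hker : (Matrix.fromBlocks (A - 1) (B * Γ) C
      (0 : Matrix (Fin p') (Fin q') ℝ)).mulVec (Sum.elim x w) = 0 := by
    rw [Matrix.fromBlocks_mulVec]
    ext (i | j)
    · simpa [← Matrix.mulVec_mulVec, hw] using congrFun e1 i
    · simpa using congrFun e2 j
  obtain ⟨hx0, hΓw⟩ := blockKer A B C Γ hrank x w hker
  have hΓ₁w₀ : Γ₁.mulVec w₀ = 0 := by rw [← hw, hΓw]
  have hw₀0 : w₀ = 0 := by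
    apply hΓ₁inj
    rw [hΓ₁w₀, Matrix.mulVec_zero]
  rw [hxww, hx0, hw₀0]
  ext (i | j) <;> rfl

/-- If `(A,C)` is detectable, `Γ₁` is injective with `im Γ₁ = im Γ`, `rank Γ = v`, and the
rank condition `rank [[A−I, BΓ],[C, 0]] = n + rank Γ` holds, then the compensated pair
`(Ā, C̄)` with `Ā = [[A, BΓ₁],[0, I]]` and `C̄ = [C 0]` is detectable
(discrete-time Hautus test). -/
theorem compensated_pair_detectable
    {n m p q v : ℕ}
    (A : Matrix (Fin n) (Fin n) ℝ) (B : Matrix (Fin n) (Fin m) ℝ)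
    (C : Matrix (Fin p) (Fin n) ℝ)
    (hdet : ∀ z : ℂ, 1 ≤ ‖z‖ →
      (Matrix.fromRows (z • (1 : Matrix (Fin n) (Fin n) ℂ) - A.map Complex.ofReal)
        (C.map Complex.ofReal)).rank = n)
    (Γ : Matrix (Fin m) (Fin q) ℝ) (hv : Γ.rank = v)
    (Γ₁ : Matrix (Fin m) (Fin v) ℝ)
    (hΓ₁inj : Function.Injective Γ₁.mulVec)
    (hΓ₁im : LinearMap.range Γ₁.mulVecLin = LinearMap.range Γ.mulVecLin)
    (hrank : (Matrix.fromBlocks (A - 1) (B * Γ) C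
      (0 : Matrix (Fin p) (Fin q) ℝ)).rank = n + Γ.rank) :
    ∀ z : ℂ, 1 ≤ ‖z‖ →
      (Matrix.fromRows
        (z • (1 : Matrix (Fin n ⊕ Fin v) (Fin n ⊕ Fin v) ℂ) -
          (Matrix.fromBlocks A (B * Γ₁) 0 (1 : Matrix (Fin v) (Fin v) ℝ)).map Complex.ofReal)
        ((Matrix.fromCols C (0 : Matrix (Fin p) (Fin v) ℝ)).map Complex.ofReal)).rank
        = n + v := by
  intro z hz
  set A' := A.map Complex.ofReal with hA'
  set B' := B.map Complex.ofReal with hB'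
  set G1 := Γ₁.map Complex.ofReal with hG1
  set C'' := C.map Complex.ofReal with hC''
  -- rewrite goal to kernel triviality
  rw [show n + v = Fintype.card (Fin n ⊕ Fin v) by simp, rank_eq_card_iff_ker,
    LinearMap.ker_eq_bot']
  intro u hu
  rw [Matrix.mulVecLin_apply, Matrix.fromRows_mulVec] at hu
  set x := u ∘ Sum.inl with hxdef
  set y := u ∘ Sum.inr with hydef
  have hue : u = Sum.elim x y := by ext (i | j) <;> rfl
  -- the top block matrix
  have hT : z • (1 : Matrix (Fin n ⊕ Fin v) (Fin n ⊕ Fin v) ℂ) -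
      (Matrix.fromBlocks A (B * Γ₁) 0 (1 : Matrix (Fin v) (Fin v) ℝ)).map Complex.ofReal =
      Matrix.fromBlocks (z • 1 - A') (-(B' * G1)) 0 ((z - 1) • 1) := by
    ext (i | i) (j | j) <;>
      simp [hA', hB', hG1, Matrix.one_apply, Matrix.mul_apply, Matrix.map_apply, sub_mul,
        apply_ite Complex.ofReal] <;>
      (try split) <;> simp
  have hC : (Matrix.fromCols C (0 : Matrix (Fin p) (Fin v) ℝ)).map Complex.ofReal =
      Matrix.fromCols C'' (0 : Matrix (Fin p) (Fin v) ℂ) := by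
    ext i (j | j) <;> simp [hC'', Matrix.fromCols, Matrix.map_apply]
  rw [hT, hC, hue, Matrix.fromBlocks_mulVec] at hu
  simp only [Sum.elim_comp_inl, Sum.elim_comp_inr] at hu
  have e1 : (z • 1 - A').mulVec x - (B' * G1).mulVec y = 0 := by
    ext i
    have h := congrFun hu (Sum.inl (Sum.inl i))
    simpa [Matrix.neg_mulVec, sub_eq_add_neg] using h
  have e2 : (z - 1) • y = 0 := by
    ext j
    have h := congrFun hu (Sum.inl (Sum.inr j))
    simpa [Matrix.smul_mulVec] using h
  have e3 : C''.mulVec x = 0 := by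
    ext i
    have h := congrFun hu (Sum.inr i)
    simpa using h
  by_cases hz1 : z = 1
  · -- z = 1 : use the rank condition
    subst hz1
    have hN : ((Matrix.fromBlocks (A - 1) (B * Γ₁) C
        (0 : Matrix (Fin p) (Fin v) ℝ)).map Complex.ofReal).mulVec (Sum.elim x y) = 0 := by
      have hmap : (Matrix.fromBlocks (A - 1) (B * Γ₁) C
          (0 : Matrix (Fin p) (Fin v) ℝ)).map Complex.ofReal =
          Matrix.fromBlocks (A' - 1) (B' * G1) C'' (0 : Matrix (Fin p) (Fin v) ℂ) := by
        ext (i | i) (j | j) <;>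
          simp [hA', hB', hG1, hC'', Matrix.one_apply, Matrix.mul_apply, Matrix.map_apply,
            apply_ite Complex.ofReal]
      have e1' : (A' - 1).mulVec x + (B' * G1).mulVec y = 0 := by
        ext i
        have h := congrFun e1 i
        simp only [one_smul, Matrix.sub_mulVec, Matrix.one_mulVec, Pi.sub_apply,
          Pi.add_apply, Pi.zero_apply] at h ⊢
        linear_combination -h
      rw [hmap, Matrix.fromBlocks_mulVec]
      ext (i | j)
      · simpa [Sum.elim_comp_inl, Sum.elim_comp_inr] using congrFun e1' i
      · simpa [Sum.elim_comp_inl, Sum.elim_comp_inr] using congrFun e3 j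
    have hreal : ∀ xw : Fin n ⊕ Fin v → ℝ,
        (Matrix.fromBlocks (A - 1) (B * Γ₁) C
          (0 : Matrix (Fin p) (Fin v) ℝ)).mulVec xw = 0 → xw = 0 :=
      fun xw hxw => blockKerGamma1 A B C Γ Γ₁ hΓ₁inj hΓ₁im hrank xw hxw
    have := map_ofReal_mulVec_eq_zero _ hreal (Sum.elim x y) hN
    rw [hue, this]
  · -- z ≠ 1 : use detectability of (A, C)
    have hy : y = 0 := by
      have hz10 : z - 1 ≠ 0 := sub_ne_zero.mpr hz1
      ext j
      have := congrFun e2 j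
      simp only [Pi.smul_apply, smul_eq_mul, Pi.zero_apply] at this
      exact (mul_eq_zero.mp this).resolve_left hz10
    have e1' : (z • 1 - A').mulVec x = 0 := by
      rw [hy] at e1
      simpa using e1
    have hx : x = 0 := by
      have hk := (rank_eq_card_iff_ker (Matrix.fromRows
        (z • (1 : Matrix (Fin n) (Fin n) ℂ) - A') C'')).mp (by
          rw [hdet z hz]; simp)
      rw [LinearMap.ker_eq_bot'] at hk
      apply hk
      rw [Matrix.mulVecLin_apply, Matrix.fromRows_mulVec]
      ext (i | j)
      · simpa using congrFun e1' i
      · simpa using congrFun e3 j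
    rw [hue, hx, hy]
    ext (i | j) <;> rfl

end
end
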